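/- arXiv:1805.11980 — 8 statements merged into one kernel-verified Lean document; each statement's English description precedes it below -/
import Mathlib

section
/- Let A = σ(R)⟨x_1,…,x_n⟩ be a skew PBW extension of a ring R. For every α = (α_1,…,α_n) ∈ ℕ^n and every r ∈ R, the following identity holds in A: x^α·r = σ_1^{α_1}(σ_2^{α_2}(⋯(σ_n^{α_n}(r))))·x_1^{α_1}⋯x_n^{α_n} + Σ_{k=1}^{n} x_1^{α_1}⋯x_{k-1}^{α_{k-1}}·( Σ_{j=1}^{α_k} x_k^{α_k−j}·δ_k(σ_k^{j−1}(σ_{k+1}^{α_{k+1}}(⋯(σ_n^{α_n}(r)))))·x_k^{j−1} )·x_{k+1}^{α_{k+1}}⋯x_n^{α_n}. -/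
open scoped BigOperators

/-- Iterated "power composition": given a family of maps `f i` and multiplicities `k i`,
`iterPow f k = (f 0)^[k 0] ∘ (f 1)^[k 1] ∘ ⋯ ∘ (f (n-1))^[k (n-1)]`.
For a family of endomorphisms `σ` this is `σ^α = σ₁^{α₁} ∘ ⋯ ∘ σₙ^{αₙ}`. -/
def iterPow {α : Type*} {n : ℕ} (f : Fin n → α → α) (k : Fin n → ℕ) : α → α :=
  (((List.finRange n).map fun i => (f i)^[k i]).foldr (· ∘ ·) id)

/-- A skew PBW extension `A = σ(R)⟨x₁,…,xₙ⟩` of a ring `R`. -/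
structure SkewPBW (R A : Type*) [Ring R] [Ring A] (n : ℕ) where
  /-- the inclusion `R ⊆ A` (a ring embedding) -/
  ι : R →+* A
  ι_inj : Function.Injective ι
  /-- the variables `x₁,…,xₙ` -/
  x : Fin n → A
  /-- `A` is a free left `R`-module with basis the standard monomials
  `x^α = x₁^{α₁} ⋯ xₙ^{αₙ}`: every element of `A` is a unique finite
  `R`-linear combination of standard monomials. -/
  free : Function.Bijective
    (fun c : (Fin n → ℕ) →₀ R =>
      c.sum fun α r => ι r * (((List.finRange n).map fun i => x i ^ α i).prod))
  /-- condition (iii): for each `i` and each nonzero `r ∈ R` there is a nonzero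
  `c_{i,r} ∈ R` with `xᵢ r − c_{i,r} xᵢ ∈ R` -/
  lin : ∀ (i : Fin n) (r : R), r ≠ 0 → ∃ cr : R, cr ≠ 0 ∧
    ∃ r' : R, x i * ι r - ι cr * x i = ι r'
  /-- the constants `c_{i,j}` of condition (iv) -/
  c : Fin n → Fin n → R
  c_ne : ∀ i j, c i j ≠ 0
  /-- condition (iv): `xⱼ xᵢ − c_{i,j} xᵢ xⱼ ∈ R + R x₁ + ⋯ + R xₙ` -/
  quad : ∀ i j, ∃ (r₀ : R) (r : Fin n → R),
    x j * x i - ι (c i j) * (x i * x j) = ι r₀ + ∑ k, ι (r k) * x k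
  /-- the injective endomorphisms `σᵢ` -/
  σ : Fin n → R →+* R
  σ_inj : ∀ i, Function.Injective (σ i)
  /-- the `σᵢ`-derivations `δᵢ` -/
  δ : Fin n → R → R
  δ_add : ∀ (i : Fin n) (a b : R), δ i (a + b) = δ i a + δ i b
  δ_leibniz : ∀ (i : Fin n) (a b : R), δ i (a * b) = σ i a * δ i b + δ i a * b
  /-- the fundamental relation `xᵢ r = σᵢ(r) xᵢ + δᵢ(r)` -/
  comm : ∀ (i : Fin n) (r : R), x i * ι r = ι (σ i r) * x i + ι (δ i r)

namespace SkewPBW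

variable {R A : Type*} [Ring R] [Ring A] {n : ℕ}

/-- The standard monomial `x^α = x₁^{α₁} ⋯ xₙ^{αₙ}`. -/
def mono (S : SkewPBW R A n) (α : Fin n → ℕ) : A :=
  ((List.finRange n).map fun i => S.x i ^ α i).prod

/-- `σ^α = σ₁^{α₁} ∘ ⋯ ∘ σₙ^{αₙ}`. -/
def sigmaPow (S : SkewPBW R A n) (α : Fin n → ℕ) : R → R :=
  iterPow (fun i => ⇑(S.σ i)) α

/-- `δ^α = δ₁^{α₁} ∘ ⋯ ∘ δₙ^{αₙ}`. -/
def deltaPow (S : SkewPBW R A n) (α : Fin n → ℕ) : R → R :=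
  iterPow S.δ α

/-- `R` is `Σ`-compatible: `a σ^α(b) = 0 ↔ a b = 0`. -/
def SigmaCompatible (S : SkewPBW R A n) : Prop :=
  ∀ (a b : R) (α : Fin n → ℕ), a * S.sigmaPow α b = 0 ↔ a * b = 0

/-- `R` is `Δ`-compatible: `a b = 0 → a δ^β(b) = 0`. -/
def DeltaCompatible (S : SkewPBW R A n) : Prop :=
  ∀ a b : R, a * b = 0 → ∀ β : Fin n → ℕ, a * S.deltaPow β b = 0

/-- `R` is `(Σ,Δ)`-compatible. -/
def SigmaDeltaCompatible (S : SkewPBW R A n) : Prop :=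
  S.SigmaCompatible ∧ S.DeltaCompatible

/-- The elements `c_{i,j}` of condition (iv) are central in `R`. -/
def CCentral (S : SkewPBW R A n) : Prop :=
  ∀ (i j : Fin n) (r : R), S.c i j * r = r * S.c i j

/-- `R` is `(Σ,Δ)`-skew Armendariz with respect to `A`:
if `fg = 0` then `aᵢXᵢ · bⱼYⱼ = 0` for all coefficients/monomials of `f` and `g`. -/
def SDSkewArmendariz (S : SkewPBW R A n) : Prop :=
  ∀ (t s : ℕ) (a : Fin (t + 1) → R) (X : Fin (t + 1) → Fin n → ℕ)
    (b : Fin (s + 1) → R) (Y : Fin (s + 1) → Fin n → ℕ),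
    Function.Injective X → Function.Injective Y →
    (∑ i, S.ι (a i) * S.mono (X i)) * (∑ j, S.ι (b j) * S.mono (Y j)) = 0 →
    ∀ i j, (S.ι (a i) * S.mono (X i)) * (S.ι (b j) * S.mono (Y j)) = 0

/-- `R` is `Σ`-skew Armendariz with respect to `A`:
if `fg = 0` then `aᵢ σ^{αᵢ}(bⱼ) = 0` where `αᵢ = exp(Xᵢ)`. -/
def SigmaSkewArmendariz (S : SkewPBW R A n) : Prop :=
  ∀ (m t : ℕ) (a : Fin (m + 1) → R) (X : Fin (m + 1) → Fin n → ℕ)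
    (b : Fin (t + 1) → R) (Y : Fin (t + 1) → Fin n → ℕ),
    Function.Injective X → Function.Injective Y →
    (∑ i, S.ι (a i) * S.mono (X i)) * (∑ j, S.ι (b j) * S.mono (Y j)) = 0 →
    ∀ i j, a i * S.sigmaPow (X i) (b j) = 0

/-- `R` is skew `Π`-Armendariz with respect to `A`:
if `fg` is nilpotent in `A`, then `aᵢ bⱼ` is nilpotent in `R` for all `i, j`. -/
def SkewPiArmendariz (S : SkewPBW R A n) : Prop :=
  ∀ (m t : ℕ) (a : Fin (m + 1) → R) (X : Fin (m + 1) → Fin n → ℕ)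
    (b : Fin (t + 1) → R) (Y : Fin (t + 1) → Fin n → ℕ),
    Function.Injective X → Function.Injective Y →
    IsNilpotent ((∑ i, S.ι (a i) * S.mono (X i)) * (∑ j, S.ι (b j) * S.mono (Y j))) →
    ∀ i j, IsNilpotent (a i * b j)

end SkewPBW

/-- A ring is reversible if `a b = 0` implies `b a = 0`. -/
def IsReversible (R : Type*) [Ring R] : Prop :=
  ∀ a b : R, a * b = 0 → b * a = 0


section SPBWaux

variable {R A : Type*} [Ring R] [Ring A] {n : ℕ}

def SPBWinnerSum (S : SkewPBW R A n) (α : Fin n → ℕ) (i : Fin n) (s : R) : A :=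
  ∑ j ∈ Finset.range (α i),
    S.x i ^ (α i - (j + 1)) * S.ι (S.δ i ((⇑(S.σ i))^[j] s)) * S.x i ^ j

def SPBWsigL (S : SkewPBW R A n) (α : Fin n → ℕ) (L : List (Fin n)) : R → R :=
  (L.map fun i => (⇑(S.σ i))^[α i]).foldr (· ∘ ·) id

def SPBWmonoL (S : SkewPBW R A n) (α : Fin n → ℕ) (L : List (Fin n)) : A :=
  (L.map fun i => S.x i ^ α i).prod

def SPBWtailTerm (S : SkewPBW R A n) (α : Fin n → ℕ) (r : R) : List (Fin n) → A
  | [] => 0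
  | i :: tl => SPBWinnerSum S α i (SPBWsigL S α tl r) * SPBWmonoL S α tl

lemma SPBW_x_pow_mul (S : SkewPBW R A n) (i : Fin n) (m : ℕ) (r : R) :
    S.x i ^ m * S.ι r = S.ι ((⇑(S.σ i))^[m] r) * S.x i ^ m +
      ∑ j ∈ Finset.range m,
        S.x i ^ (m - (j + 1)) * S.ι (S.δ i ((⇑(S.σ i))^[j] r)) * S.x i ^ j := by
  induction m with
  | zero => simp
  | succ m ih =>
    rw [pow_succ', mul_assoc, ih, mul_add, ← mul_assoc, S.comm, Finset.mul_sum,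
      Finset.sum_range_succ]
    have h1 : ∀ j ∈ Finset.range m,
        S.x i * (S.x i ^ (m - (j + 1)) * S.ι (S.δ i ((⇑(S.σ i))^[j] r)) * S.x i ^ j)
        = S.x i ^ (m + 1 - (j + 1)) * S.ι (S.δ i ((⇑(S.σ i))^[j] r)) * S.x i ^ j := by
      intro j hj
      rw [Finset.mem_range] at hj
      have h : m + 1 - (j + 1) = (m - (j + 1)) + 1 := by omega
      rw [h, pow_succ', mul_assoc, mul_assoc, mul_assoc]
    rw [Finset.sum_congr rfl h1]
    have h0 : m + 1 - (m + 1) = 0 := by omega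
    rw [h0, pow_zero, one_mul, Function.iterate_succ_apply', add_mul]
    simp only [mul_assoc]
    abel

lemma SPBW_key (S : SkewPBW R A n) (α : Fin n → ℕ) :
    ∀ (L : List (Fin n)) (r : R),
    SPBWmonoL S α L * S.ι r = S.ι (SPBWsigL S α L r) * SPBWmonoL S α L +
      ∑ k ∈ Finset.range L.length,
        SPBWmonoL S α (L.take k) * SPBWtailTerm S α r (L.drop k)
  | [], r => by simp [SPBWmonoL, SPBWsigL, SPBWtailTerm]
  | (i :: L'), r => by
    have hmono : SPBWmonoL S α (i :: L') = S.x i ^ α i * SPBWmonoL S α L' := by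
      simp [SPBWmonoL]
    have hsig : SPBWsigL S α (i :: L') r = (⇑(S.σ i))^[α i] (SPBWsigL S α L' r) := by
      simp [SPBWsigL]
    rw [hmono, mul_assoc, SPBW_key S α L' r, mul_add, ← mul_assoc, SPBW_x_pow_mul,
      List.length_cons, Finset.sum_range_succ']
    simp only [List.take_zero, List.drop_zero, List.take_succ_cons, List.drop_succ_cons]
    have h2 : ∀ k ∈ Finset.range L'.length,
        SPBWmonoL S α (i :: L'.take k) * SPBWtailTerm S α r (L'.drop k)
        = S.x i ^ α i * (SPBWmonoL S α (L'.take k) * SPBWtailTerm S α r (L'.drop k)) := by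
      intro k _
      simp [SPBWmonoL, mul_assoc]
    rw [Finset.sum_congr rfl h2, ← Finset.mul_sum]
    have h3 : SPBWtailTerm S α r (i :: L')
        = SPBWinnerSum S α i (SPBWsigL S α L' r) * SPBWmonoL S α L' := rfl
    have h4 : SPBWmonoL S α ([] : List (Fin n)) = 1 := by simp [SPBWmonoL]
    rw [h3, h4, one_mul, hsig, add_mul]
    unfold SPBWinnerSum
    simp only [mul_assoc]
    abel

end SPBWaux

/-- In a skew PBW extension `A = σ(R)⟨x₁,…,xₙ⟩`, for every
`α ∈ ℕⁿ` and `r ∈ R`: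
`x^α r = σ₁^{α₁}(⋯(σₙ^{αₙ}(r))) x₁^{α₁}⋯xₙ^{αₙ}
 + Σ_{k=1}^n x₁^{α₁}⋯x_{k-1}^{α_{k-1}} (Σ_{j=1}^{αₖ} xₖ^{αₖ-j} δₖ(σₖ^{j-1}(σ_{k+1}^{α_{k+1}}(⋯(σₙ^{αₙ}(r))))) xₖ^{j-1}) x_{k+1}^{α_{k+1}}⋯xₙ^{αₙ}`. -/
theorem skewPBW_mono_mul_coeff {R A : Type*} [Ring R] [Ring A] {n : ℕ}
    (S : SkewPBW R A n) (α : Fin n → ℕ) (r : R) :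
    S.mono α * S.ι r =
      S.ι (S.sigmaPow α r) * S.mono α +
      ∑ k : Fin n,
        (((List.finRange n).take k.val).map fun i => S.x i ^ α i).prod *
          (∑ j ∈ Finset.range (α k),
            S.x k ^ (α k - (j + 1)) *
              S.ι (S.δ k ((⇑(S.σ k))^[j]
                (((((List.finRange n).drop (k.val + 1)).map
                    fun i => (⇑(S.σ i))^[α i]).foldr (· ∘ ·) id) r))) *
              S.x k ^ j) *
          (((List.finRange n).drop (k.val + 1)).map fun i => S.x i ^ α i).prod := by

  have hkey := SPBW_key S α (List.finRange n) r
  have hlen : (List.finRange n).length = n := List.length_finRange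
  have hmono : SPBWmonoL S α (List.finRange n) = S.mono α := rfl
  have hsig : SPBWsigL S α (List.finRange n) = S.sigmaPow α := rfl
  rw [hmono, hsig] at hkey
  rw [hkey]
  congr 1
  rw [hlen, ← Fin.sum_univ_eq_sum_range (fun k =>
      SPBWmonoL S α ((List.finRange n).take k) * SPBWtailTerm S α r ((List.finRange n).drop k)) n]
  apply Finset.sum_congr rfl
  intro k _
  have hk : k.val < (List.finRange n).length := by rw [hlen]; exact k.isLt
  have hdrop : (List.finRange n).drop k.val
      = k :: (List.finRange n).drop (k.val + 1) := by
    rw [List.drop_eq_getElem_cons hk]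
    congr 1
    simp
  rw [hdrop]
  have h3 : SPBWtailTerm S α r (k :: (List.finRange n).drop (k.val + 1))
      = SPBWinnerSum S α k (SPBWsigL S α ((List.finRange n).drop (k.val + 1)) r)
        * SPBWmonoL S α ((List.finRange n).drop (k.val + 1)) := rfl
  rw [h3, ← mul_assoc]
  rfl
end

section
/- Let A = σ(R)⟨x_1,…,x_n⟩ be a skew PBW extension of a reversible and (Σ,Δ)-compatible ring R, and assume the elements c_{i,j} of condition (iv) are central in R. If f = a_0 + a_1X_1 + ⋯ + a_mX_m ∈ A has all its coefficients a_i nilpotent in R, and k is a positive integer with a_i^k = 0 for every 0 ≤ i ≤ m, then f^{(m+1)k+1} = 0 in A. -/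
open scoped BigOperators

namespace SPBWAux


lemma foldr_notmem {α : Type*} {n : ℕ} (f : Fin n → α → α) (i : Fin n) :
    ∀ (L : List (Fin n)), i ∉ L →
      ((L.map fun j => (f j)^[(Pi.single i 1 : Fin n → ℕ) j]).foldr (· ∘ ·) id) = id := by
  intro L
  induction L with
  | nil => intro _; rfl
  | cons j L ih =>
    intro h
    have hji : j ≠ i := fun hj => h (hj ▸ List.mem_cons_self)
    have h0 : (Pi.single i 1 : Fin n → ℕ) j = 0 := Pi.single_eq_of_ne hji 1
    simp only [List.map_cons, List.foldr_cons, h0, Function.iterate_zero]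
    rw [ih (fun hx => h (List.mem_cons_of_mem _ hx))]
    rfl

lemma iterPow_single {α : Type*} {n : ℕ} (f : Fin n → α → α) (i : Fin n) :
    iterPow f ((Pi.single i 1 : Fin n → ℕ)) = f i := by
  unfold iterPow
  have key : ∀ (L : List (Fin n)), L.Nodup → i ∈ L →
      ((L.map fun j => (f j)^[(Pi.single i 1 : Fin n → ℕ) j]).foldr (· ∘ ·) id) = f i := by
    intro L
    induction L with
    | nil => intro _ h; exact absurd h List.not_mem_nil
    | cons j L ih =>
      intro hnd hm
      rcases List.nodup_cons.1 hnd with ⟨hj, hnd'⟩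
      simp only [List.map_cons, List.foldr_cons]
      by_cases hji : j = i
      · subst hji
        rw [foldr_notmem f j L hj]
        simp [Pi.single_eq_same]
      · have h0 : (Pi.single i 1 : Fin n → ℕ) j = 0 := Pi.single_eq_of_ne hji 1
        have hm' : i ∈ L := by
          rcases List.mem_cons.1 hm with h | h
          · exact absurd h.symm hji
          · exact h
        rw [h0, ih hnd' hm']
        simp
  exact key (List.finRange n) (List.nodup_finRange n) (List.mem_finRange i)


variable {R A : Type*} [Ring R] [Ring A] {n : ℕ}

/-- one-step twist by a `σᵢ` or a `δᵢ` -/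
def Step (S : SkewPBW R A n) (a b : R) : Prop := ∃ i, b = S.σ i a ∨ b = S.δ i a

/-- `Rel S a b` : `b` is obtained from `a` by a word in the `σᵢ`'s and `δᵢ`'s. -/
def Rel (S : SkewPBW R A n) : R → R → Prop := Relation.ReflTransGen (Step S)

lemma rel_refl (S : SkewPBW R A n) (a : R) : Rel S a a := Relation.ReflTransGen.refl

lemma rel_sigma (S : SkewPBW R A n) (a : R) (i : Fin n) : Rel S a (S.σ i a) :=
  Relation.ReflTransGen.single ⟨i, Or.inl rfl⟩

lemma rel_delta (S : SkewPBW R A n) (a : R) (i : Fin n) : Rel S a (S.δ i a) :=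
  Relation.ReflTransGen.single ⟨i, Or.inr rfl⟩

lemma rel_trans {S : SkewPBW R A n} {a b c : R} (h1 : Rel S a b) (h2 : Rel S b c) :
    Rel S a c := Relation.ReflTransGen.trans h1 h2

lemma step_zero {S : SkewPBW R A n} (hcomp : S.SigmaDeltaCompatible)
    {u a b : R} (hu : u * a = 0) (h : Step S a b) : u * b = 0 := by
  obtain ⟨i, h | h⟩ := h <;> subst h
  · have := (hcomp.1 u a (Pi.single i 1)).2 hu
    rwa [SkewPBW.sigmaPow, iterPow_single] at this
  · have := hcomp.2 u a hu (Pi.single i 1)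
    rwa [SkewPBW.deltaPow, iterPow_single] at this

lemma rel_zero {S : SkewPBW R A n} (hcomp : S.SigmaDeltaCompatible)
    {u a b : R} (hu : u * a = 0) (h : Rel S a b) : u * b = 0 := by
  induction h with
  | refl => exact hu
  | tail _ hstep ih => exact step_zero hcomp ih hstep

lemma semicomm (hrev : IsReversible R) {a b : R} (h : a * b = 0) (r : R) :
    a * r * b = 0 := by
  have h1 : b * a = 0 := hrev _ _ h
  have h2 : b * (a * r) = 0 := by rw [← mul_assoc, h1, zero_mul]
  exact hrev _ _ h2

lemma insert_step {S : SkewPBW R A n} (hrev : IsReversible R)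
    (hcomp : S.SigmaDeltaCompatible) {a u b : R} {s : ℕ}
    (hu : u * a ^ (s + 1) = 0) (hb : Rel S a b) : u * b * a ^ s = 0 := by
  have h1 : u * a * a ^ s = 0 := by rw [mul_assoc, ← pow_succ']; exact hu
  have h2 : a ^ s * (u * a) = 0 := hrev _ _ h1
  have h3 : a ^ s * u * a = 0 := by rw [mul_assoc]; exact h2
  have h4 : a ^ s * u * b = 0 := rel_zero hcomp h3 hb
  have h5 : a ^ s * (u * b) = 0 := by rw [← mul_assoc]; exact h4
  exact hrev _ _ h5

lemma annihilate {S : SkewPBW R A n} (hrev : IsReversible R)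
    (hcomp : S.SigmaDeltaCompatible) {m : ℕ} (a : Fin (m + 1) → R) (i : Fin (m + 1)) :
    ∀ (bl : List (Fin (m + 1) × R)) (s : ℕ) (u : R),
      (∀ p ∈ bl, Rel S (a p.1) p.2) → u * a i ^ s = 0 →
      s ≤ (bl.map Prod.fst).count i → u * (bl.map Prod.snd).prod = 0 := by
  intro bl
  induction bl with
  | nil =>
    intro s u _ hu hs
    have : s = 0 := by simpa using hs
    subst this
    simpa using hu
  | cons p bl ih =>
    intro s u hrel hu hs
    simp only [List.map_cons, List.prod_cons, ← mul_assoc]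
    by_cases hpi : p.1 = i
    · cases s with
      | zero =>
        have hu0 : u = 0 := by simpa using hu
        simp [hu0]
      | succ s' =>
        have hb : Rel S (a i) p.2 := hpi ▸ hrel p (List.mem_cons_self)
        have h1 : u * p.2 * a i ^ s' = 0 := insert_step hrev hcomp hu hb
        refine ih s' (u * p.2) (fun q hq => hrel q (List.mem_cons_of_mem _ hq)) h1 ?_
        have : ((p :: bl).map Prod.fst).count i = (bl.map Prod.fst).count i + 1 := by
          simp [List.count_cons, hpi]
        omega
    · have h1 : u * p.2 * a i ^ s = 0 := semicomm hrev hu p.2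
      refine ih s (u * p.2) (fun q hq => hrel q (List.mem_cons_of_mem _ hq)) h1 ?_
      have : ((p :: bl).map Prod.fst).count i = (bl.map Prod.fst).count i := by
        simp [List.count_cons, hpi]
      omega

lemma pigeon {m k : ℕ} (l : List (Fin (m + 1))) (hl : l.length = (m + 1) * k + 1) :
    ∃ i, k ≤ l.count i := by
  by_contra h
  push_neg at h
  have hk0 : k ≠ 0 := by
    intro hk
    subst hk
    exact absurd (h ⟨0, Nat.succ_pos m⟩) (by omega)
  obtain ⟨K, rfl⟩ : ∃ K, k = K + 1 := ⟨k - 1, by omega⟩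
  have h1 := Multiset.toFinset_sum_count_eq (l : Multiset (Fin (m + 1)))
  have h2 : ∑ i ∈ (l : Multiset (Fin (m + 1))).toFinset,
      Multiset.count i (l : Multiset (Fin (m + 1))) ≤
      (l : Multiset (Fin (m + 1))).toFinset.card • K := by
    refine Finset.sum_le_card_nsmul _ _ _ ?_
    intro i _
    have hi := h i
    have hc : Multiset.count i (l : Multiset (Fin (m + 1))) = l.count i :=
      Multiset.coe_count i l
    omega
  have h3 : (l : Multiset (Fin (m + 1))).toFinset.card ≤ m + 1 := by
    have := Finset.card_le_card (Finset.subset_univ ((l : Multiset (Fin (m + 1))).toFinset))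
    simpa using this
  have h4 : Multiset.card (l : Multiset (Fin (m + 1))) = l.length := Multiset.coe_card l
  have h5 : (l : Multiset (Fin (m + 1))).toFinset.card • K ≤ (m + 1) * K := by
    rw [smul_eq_mul]
    exact Nat.mul_le_mul_right K h3
  have h6 : (m + 1) * (K + 1) + 1 ≤ (m + 1) * K := by
    rw [← hl, ← h4, ← h1]
    exact le_trans h2 h5
  have h7 : (m + 1) * (K + 1) = (m + 1) * K + (m + 1) := by ring
  omega


/-- the multiplicative monoid generated by the variables -/
def MonCl (S : SkewPBW R A n) : Submonoid A := Submonoid.closure (Set.range S.x)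

lemma mono_mem (S : SkewPBW R A n) (α : Fin n → ℕ) : S.mono α ∈ MonCl S := by
  refine Submonoid.list_prod_mem _ ?_
  intro z hz
  rcases List.mem_map.1 hz with ⟨i, _, rfl⟩
  have hx : S.x i ∈ MonCl S := Submonoid.subset_closure (Set.mem_range_self i)
  exact pow_mem hx _

/-- the additive monoid generated by elements `ι b * W` with `b ∈ s`, `W` a word in the `xᵢ` -/
def Espan (S : SkewPBW R A n) (s : Set R) : AddSubmonoid A :=
  AddSubmonoid.closure {z | ∃ b ∈ s, ∃ W ∈ MonCl S, z = S.ι b * W}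

lemma Espan_mul_right {S : SkewPBW R A n} {s : Set R} {y : A} (hy : y ∈ Espan S s)
    {W : A} (hW : W ∈ MonCl S) : y * W ∈ Espan S s := by
  refine AddSubmonoid.closure_induction (motive := fun y _ => y * W ∈ Espan S s) ?_ ?_ ?_ hy
  all_goals beta_reduce
  · rintro z ⟨b, hb, W', hW', rfl⟩
    exact AddSubmonoid.subset_closure ⟨b, hb, W' * W, mul_mem hW' hW, by rw [mul_assoc]⟩
  · rw [zero_mul]; exact zero_mem _
  · intro y1 y2 _ _ h1 h2
    rw [add_mul]; exact add_mem h1 h2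

lemma push {S : SkewPBW R A n} {s : Set R}
    (hσ : ∀ b ∈ s, ∀ i, S.σ i b ∈ s) (hδ : ∀ b ∈ s, ∀ i, S.δ i b ∈ s) :
    ∀ W ∈ MonCl S, ∀ r ∈ s, W * S.ι r ∈ Espan S s := by
  intro W hW
  refine Submonoid.closure_induction
    (motive := fun W _ => ∀ r ∈ s, W * S.ι r ∈ Espan S s) ?_ ?_ ?_ hW
  all_goals beta_reduce
  · rintro z ⟨i, rfl⟩ r hr
    rw [S.comm i r]
    refine add_mem ?_ ?_
    · exact AddSubmonoid.subset_closure
        ⟨_, hσ r hr i, S.x i, Submonoid.subset_closure ⟨i, rfl⟩, rfl⟩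
    · exact AddSubmonoid.subset_closure ⟨_, hδ r hr i, 1, one_mem _, (mul_one _).symm⟩
  · intro r hr
    rw [one_mul]
    exact AddSubmonoid.subset_closure ⟨r, hr, 1, one_mem _, (mul_one _).symm⟩
  · intro W1 W2 hW1 hW2 h1 h2 r hr
    rw [mul_assoc]
    refine AddSubmonoid.closure_induction
      (motive := fun y _ => W1 * y ∈ Espan S s) ?_ ?_ ?_ (h2 r hr)
    all_goals beta_reduce
    · rintro z ⟨b, hb, W', hW', rfl⟩
      rw [← mul_assoc]
      exact Espan_mul_right (h1 b hb) hW'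
    · rw [mul_zero]; exact zero_mem _
    · intro y1 y2 _ _ g1 g2
      rw [mul_add]; exact add_mem g1 g2

/-- the generating set of coefficient words attached to a list of indices -/
def Bgen (S : SkewPBW R A n) {m : ℕ} (a : Fin (m + 1) → R) (l : List (Fin (m + 1))) :
    Set R :=
  {w | ∃ bl : List (Fin (m + 1) × R), bl.map Prod.fst = l ∧
    (∀ p ∈ bl, Rel S (a p.1) p.2) ∧ w = (bl.map Prod.snd).prod}

def Bs (S : SkewPBW R A n) {m : ℕ} (a : Fin (m + 1) → R) (l : List (Fin (m + 1))) :
    AddSubmonoid R :=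
  AddSubmonoid.closure (Bgen S a l)

lemma cons_mul_mem {S : SkewPBW R A n} {m : ℕ} {a : Fin (m + 1) → R}
    {j : Fin (m + 1)} {c : R} (hc : Rel S (a j) c) {l : List (Fin (m + 1))}
    {y : R} (hy : y ∈ Bs S a l) : c * y ∈ Bs S a (j :: l) := by
  refine AddSubmonoid.closure_induction (motive := fun y _ => c * y ∈ Bs S a (j :: l))
    ?_ ?_ ?_ hy
  all_goals beta_reduce
  · rintro w ⟨bl, hfst, hrel, rfl⟩
    refine AddSubmonoid.subset_closure ⟨(j, c) :: bl, ?_, ?_, ?_⟩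
    · simp [hfst]
    · intro p hp
      rcases List.mem_cons.1 hp with h | h
      · subst h; exact hc
      · exact hrel p h
    · simp
  · rw [mul_zero]; exact zero_mem _
  · intro y1 y2 _ _ h1 h2
    rw [mul_add]; exact add_mem h1 h2

lemma sigma_mem_Bs {S : SkewPBW R A n} {m : ℕ} {a : Fin (m + 1) → R} (i : Fin n)
    {l : List (Fin (m + 1))} {y : R} (hy : y ∈ Bs S a l) : S.σ i y ∈ Bs S a l := by
  refine AddSubmonoid.closure_induction (motive := fun y _ => S.σ i y ∈ Bs S a l)
    ?_ ?_ ?_ hy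
  all_goals beta_reduce
  · rintro w ⟨bl, hfst, hrel, rfl⟩
    refine AddSubmonoid.subset_closure
      ⟨bl.map (fun p => (p.1, S.σ i p.2)), ?_, ?_, ?_⟩
    · rw [List.map_map]
      exact hfst
    · intro p hp
      rcases List.mem_map.1 hp with ⟨q, hq, rfl⟩
      exact rel_trans (hrel q hq) (rel_sigma S q.2 i)
    · rw [map_list_prod (S.σ i), List.map_map, List.map_map]
      rfl
  · rw [map_zero]; exact zero_mem _
  · intro y1 y2 _ _ h1 h2
    rw [map_add]; exact add_mem h1 h2

lemma delta_zero (S : SkewPBW R A n) (i : Fin n) : S.δ i 0 = 0 := by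
  have h := S.δ_add i 0 0
  rw [add_zero] at h
  exact add_left_cancel (h.symm.trans (add_zero _).symm)

lemma delta_one (S : SkewPBW R A n) (i : Fin n) : S.δ i 1 = 0 := by
  have h := S.δ_leibniz i 1 1
  rw [mul_one, map_one, one_mul, mul_one] at h
  exact add_left_cancel (h.symm.trans (add_zero _).symm)

lemma delta_prod {S : SkewPBW R A n} {m : ℕ} {a : Fin (m + 1) → R} (i : Fin n) :
    ∀ (bl : List (Fin (m + 1) × R)), (∀ p ∈ bl, Rel S (a p.1) p.2) →
      S.δ i ((bl.map Prod.snd).prod) ∈ Bs S a (bl.map Prod.fst) := by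
  intro bl
  induction bl with
  | nil =>
    intro _
    simp only [List.map_nil, List.prod_nil]
    rw [delta_one]
    exact zero_mem _
  | cons p bl ih =>
    intro hrel
    simp only [List.map_cons, List.prod_cons]
    rw [S.δ_leibniz]
    refine add_mem ?_ ?_
    · exact cons_mul_mem (rel_trans (hrel p (List.mem_cons_self)) (rel_sigma S p.2 i))
        (ih (fun q hq => hrel q (List.mem_cons_of_mem _ hq)))
    · refine cons_mul_mem (rel_trans (hrel p (List.mem_cons_self)) (rel_delta S p.2 i))
        (AddSubmonoid.subset_closure ⟨bl, rfl, fun q hq => hrel q (List.mem_cons_of_mem _ hq), rfl⟩)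

lemma delta_mem_Bs {S : SkewPBW R A n} {m : ℕ} {a : Fin (m + 1) → R} (i : Fin n)
    {l : List (Fin (m + 1))} {y : R} (hy : y ∈ Bs S a l) : S.δ i y ∈ Bs S a l := by
  refine AddSubmonoid.closure_induction (motive := fun y _ => S.δ i y ∈ Bs S a l)
    ?_ ?_ ?_ hy
  all_goals beta_reduce
  · rintro w ⟨bl, hfst, hrel, rfl⟩
    subst hfst
    exact delta_prod i bl hrel
  · rw [delta_zero]; exact zero_mem _
  · intro y1 y2 _ _ h1 h2
    rw [S.δ_add]; exact add_mem h1 h2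

lemma prod_mem {S : SkewPBW R A n} {m : ℕ} (a : Fin (m + 1) → R)
    (X : Fin (m + 1) → Fin n → ℕ) :
    ∀ l : List (Fin (m + 1)),
      ((l.map fun i => S.ι (a i) * S.mono (X i)).prod) ∈ Espan S (Bs S a l : Set R) := by
  intro l
  induction l with
  | nil =>
    simp only [List.map_nil, List.prod_nil]
    refine AddSubmonoid.subset_closure ⟨1, ?_, 1, one_mem _, by rw [map_one, one_mul]⟩
    exact AddSubmonoid.subset_closure ⟨[], rfl, by simp, by simp⟩
  | cons i l ih =>
    simp only [List.map_cons, List.prod_cons]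
    have key : ∀ y ∈ Espan S (Bs S a l : Set R),
        (S.ι (a i) * S.mono (X i)) * y ∈ Espan S (Bs S a (i :: l) : Set R) := by
      intro y hy
      refine AddSubmonoid.closure_induction
        (motive := fun y _ => (S.ι (a i) * S.mono (X i)) * y ∈ Espan S (Bs S a (i :: l) : Set R))
        ?_ ?_ ?_ hy
      all_goals beta_reduce
      · rintro z ⟨b, hb, W', hW', rfl⟩
        have h1 : S.mono (X i) * S.ι b ∈ Espan S (Bs S a l : Set R) :=
          push (fun c hc j => sigma_mem_Bs j hc) (fun c hc j => delta_mem_Bs j hc)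
            (S.mono (X i)) (mono_mem S (X i)) b hb
        have h2 : ∀ y ∈ Espan S (Bs S a l : Set R),
            S.ι (a i) * y ∈ Espan S (Bs S a (i :: l) : Set R) := by
          intro y hy
          refine AddSubmonoid.closure_induction
            (motive := fun y _ => S.ι (a i) * y ∈ Espan S (Bs S a (i :: l) : Set R)) ?_ ?_ ?_ hy
          all_goals beta_reduce
          · rintro z ⟨c, hc, W'', hW'', rfl⟩
            refine AddSubmonoid.subset_closure ⟨a i * c, ?_, W'', hW'', ?_⟩
            · exact cons_mul_mem (rel_refl S (a i)) hc
            · rw [map_mul, mul_assoc]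
          · rw [mul_zero]; exact zero_mem _
          · intro y1 y2 _ _ g1 g2
            rw [mul_add]; exact add_mem g1 g2
        have h3 := Espan_mul_right (h2 _ h1) hW'
        simpa only [mul_assoc] using h3
      · rw [mul_zero]; exact zero_mem _
      · intro y1 y2 _ _ g1 g2
        rw [mul_add]; exact add_mem g1 g2
    exact key _ ih

lemma sum_pow_expand {A : Type*} [Ring A] {ι : Type*} [Fintype ι] (v : ι → A) (N : ℕ) :
    (∑ i, v i) ^ N = ∑ p : Fin N → ι, (List.ofFn fun t => v (p t)).prod := by
  induction N with
  | zero => simp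
  | succ N ih =>
    rw [pow_succ', ih, Finset.mul_sum]
    rw [← Equiv.sum_comp (Fin.consEquiv (fun _ : Fin (N + 1) => ι))
      (fun q => (List.ofFn fun t => v (q t)).prod)]
    rw [Fintype.sum_prod_type]
    rw [Finset.sum_comm]
    refine Finset.sum_congr rfl ?_
    intro p _
    rw [Finset.sum_mul]
    refine Finset.sum_congr rfl ?_
    intro i _
    have : (List.ofFn fun t => v ((Fin.consEquiv (fun _ : Fin (N+1) => ι)) (i, p) t)) =
        v i :: List.ofFn (fun t => v (p t)) := by
      rw [List.ofFn_succ]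
      simp [Fin.consEquiv]
    rw [this, List.prod_cons]

end SPBWAux

/-- Let `A` be a skew PBW extension of a reversible, `(Σ,Δ)`-compatible
ring `R`, with the constants `c_{i,j}` of condition (iv) central in `R`.  If
`f = a₀ + a₁X₁ + ⋯ + aₘXₘ ∈ A` has all coefficients nilpotent in `R` and `k > 0`
satisfies `aᵢ^k = 0` for all `i`, then `f^{(m+1)k+1} = 0` in `A`. -/
theorem skewPBW_nilpotency_index {R A : Type*} [Ring R] [Ring A] {n : ℕ}
    (S : SkewPBW R A n) (hrev : IsReversible R)
    (hcomp : S.SigmaDeltaCompatible) (hc : S.CCentral)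
    (m : ℕ) (a : Fin (m + 1) → R) (X : Fin (m + 1) → Fin n → ℕ)
    (hX : Function.Injective X)
    (k : ℕ) (hk : 0 < k) (ha : ∀ i, a i ^ k = 0) :
    (∑ i, S.ι (a i) * S.mono (X i)) ^ ((m + 1) * k + 1) = 0 := by
  classical
  rw [SPBWAux.sum_pow_expand]
  refine Finset.sum_eq_zero ?_
  intro p _
  have hterm : (List.ofFn fun t => S.ι (a (p t)) * S.mono (X (p t))) =
      (List.ofFn p).map fun i => S.ι (a i) * S.mono (X i) := by
    rw [List.map_ofFn]; rfl
  rw [hterm]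
  set l := List.ofFn p with hl
  have hlen : l.length = (m + 1) * k + 1 := by simp [hl]
  obtain ⟨i0, hi0⟩ := SPBWAux.pigeon l hlen
  have hB : SPBWAux.Bs S a l ≤ ⊥ := by
    rw [SPBWAux.Bs]
    refine AddSubmonoid.closure_le.2 ?_
    rintro w ⟨bl, hfst, hrel, rfl⟩
    have hcount : k ≤ (bl.map Prod.fst).count i0 := by rw [hfst]; exact hi0
    have h0 : (1 : R) * a i0 ^ k = 0 := by rw [one_mul]; exact ha i0
    have hz := SPBWAux.annihilate hrev hcomp a i0 bl k 1 hrel h0 hcount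
    rw [one_mul] at hz
    simp [hz]
  have hE : SPBWAux.Espan S (SPBWAux.Bs S a l : Set R) ≤ ⊥ := by
    rw [SPBWAux.Espan]
    refine AddSubmonoid.closure_le.2 ?_
    rintro z ⟨b, hb, W, hW, rfl⟩
    have hb0 : b = 0 := by simpa using hB hb
    simp [hb0]
  have hfin := hE (SPBWAux.prod_mem a X l)
  simpa using hfin
end

section
/- Let A = σ(R)⟨x_1,…,x_n⟩ be a skew PBW extension of a ring R with the elements c_{i,j} of condition (iv) central in R, and suppose R is Σ-compatible and (Σ,Δ)-skew Armendariz. If f = Σ_{i=0}^{m} a_iX_i and g = Σ_{j=0}^{t} b_jY_j are elements of A with fg = 0, then a_i b_j = 0 in R for every 0 ≤ i ≤ m and 0 ≤ j ≤ t. -/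
open scoped BigOperators

section Generic

def endPow {α : Type*} (f : α → α) (m : ℕ) : Function.End α := f^[m]
theorem endPow_zero {α : Type*} (f : α → α) : endPow f 0 = 1 := rfl
theorem endPow_succ {α : Type*} (f : α → α) (k : ℕ) : endPow f (k+1) = endPow f 1 * endPow f k := by
  show (f^[k+1] : Function.End α) = _
  rw [Function.iterate_succ']
  rfl

theorem mem_take_finRange {n : ℕ} {i : Fin n} {k : Fin n}
    (h : k ∈ (List.finRange n).take i) : k < i := by
  rw [List.mem_take_iff_getElem] at h
  obtain ⟨m, hm, rfl⟩ := h
  have hmi : m < (i : ℕ) := lt_of_lt_of_le hm (by simp)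
  simp only [List.getElem_finRange, Fin.lt_def, Fin.cast_mk]
  simpa using hmi

theorem mem_drop_finRange {n : ℕ} {i : Fin n} {k : Fin n}
    (h : k ∈ (List.finRange n).drop ((i:ℕ)+1)) : (i:ℕ) < (k:ℕ) := by
  rw [List.mem_drop_iff_getElem] at h
  obtain ⟨m, hm, rfl⟩ := h
  simp only [List.getElem_finRange, Fin.cast_mk]
  omega

theorem finRange_decomp {n : ℕ} (i : Fin n) :
    List.finRange n = (List.finRange n).take i ++ i :: (List.finRange n).drop ((i:ℕ)+1) := by
  have h : (i:ℕ) < (List.finRange n).length := by simp [i.isLt]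
  have := List.drop_eq_getElem_cons h
  have hi : (List.finRange n)[(i:ℕ)] = i := by simp [List.getElem_finRange]
  rw [hi] at this
  rw [← this, List.take_append_drop]

theorem prod_cons_of_min {M : Type*} [Monoid M] {n : ℕ} (g : Fin n → ℕ → M)
    (h0 : ∀ i, g i 0 = 1) (hs : ∀ i a, g i (a + 1) = g i 1 * g i a)
    (i : Fin n) (α : Fin n → ℕ) (hmin : ∀ k, k < i → α k = 0) :
    ((List.finRange n).map fun k => g k (α k + (if k = i then 1 else 0))).prod
      = g i 1 * ((List.finRange n).map fun k => g k (α k)).prod := by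
  have hd := finRange_decomp i
  rw [hd, List.map_append, List.prod_append, List.map_cons, List.prod_cons,
      List.map_append, List.prod_append, List.map_cons, List.prod_cons]
  have htake1 : (((List.finRange n).take i).map fun k => g k (α k + (if k = i then 1 else 0))).prod = 1 := by
    apply List.prod_eq_one
    intro z hz
    obtain ⟨k, hk, rfl⟩ := List.mem_map.1 hz
    have hki := mem_take_finRange hk
    rw [if_neg (Fin.ne_of_lt hki), hmin k hki, h0]
  have htake2 : (((List.finRange n).take i).map fun k => g k (α k)).prod = 1 := by
    apply List.prod_eq_one
    intro z hz
    obtain ⟨k, hk, rfl⟩ := List.mem_map.1 hz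
    have hki := mem_take_finRange hk
    rw [hmin k hki, h0]
  have hdropeq : (((List.finRange n).drop ((i:ℕ)+1)).map fun k => g k (α k + (if k = i then 1 else 0))).prod
      = (((List.finRange n).drop ((i:ℕ)+1)).map fun k => g k (α k)).prod := by
    congr 1
    apply List.map_congr_left
    intro k hk
    have := mem_drop_finRange hk
    rw [if_neg (by intro h; subst h; omega), add_zero]
  rw [htake1, htake2, hdropeq, if_pos rfl, hs i (α i)]
  rw [one_mul, one_mul, mul_assoc]

theorem prod_all_zero {M : Type*} [Monoid M] {n : ℕ} (g : Fin n → ℕ → M)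
    (h0 : ∀ i, g i 0 = 1) (α : Fin n → ℕ) (hα : ∀ k, α k = 0) :
    ((List.finRange n).map fun k => g k (α k)).prod = 1 := by
  apply List.prod_eq_one
  intro z hz
  obtain ⟨k, _, rfl⟩ := List.mem_map.1 hz
  rw [hα k, h0]

end Generic

theorem prod_map_eq_one {M : Type*} [Monoid M] {n : ℕ} (g : Fin n → M) (h : ∀ i, g i = 1) :
    ((List.finRange n).map g).prod = 1 := by
  apply List.prod_eq_one
  intro z hz
  obtain ⟨k, _, rfl⟩ := List.mem_map.1 hz
  exact h k

section SPWbasic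

theorem iterPow_eq_prod {α : Type*} {n : ℕ} (f : Fin n → α → α) (k : Fin n → ℕ) :
    iterPow f k = List.prod ((List.finRange n).map fun i => endPow (f i) (k i)) := by
  unfold iterPow
  induction (List.finRange n) with
  | nil => rfl
  | cons a l ih => rw [List.map_cons, List.foldr_cons, List.map_cons, List.prod_cons, ih]; rfl

variable {R A : Type*} [Ring R] [Ring A] {n : ℕ}

/-- exponent of a single variable -/
def es {n : ℕ} (i : Fin n) : Fin n → ℕ := fun k => if k = i then 1 else 0

/-- total degree of a multi-exponent -/
def dg {n : ℕ} (α : Fin n → ℕ) : ℕ := ∑ k, α k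

theorem dg_add (α β : Fin n → ℕ) : dg (α + β) = dg α + dg β := by
  simp [dg, Finset.sum_add_distrib]

theorem dg_es (i : Fin n) : dg (es i) = 1 := by
  simp [dg, es]

theorem dg_eq_zero {α : Fin n → ℕ} (h : dg α = 0) : α = 0 := by
  funext k
  have := Finset.sum_eq_zero_iff.1 h k (Finset.mem_univ k)
  simpa using this

namespace SkewPBW

variable (S : SkewPBW R A n)

def phi (c : (Fin n → ℕ) →₀ R) : A := c.sum fun α r => S.ι r * S.mono α

theorem phi_inj : Function.Injective S.phi := S.free.injective

theorem phi_single (α : Fin n → ℕ) (r : R) : S.phi (Finsupp.single α r) = S.ι r * S.mono α := by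
  unfold phi
  apply Finsupp.sum_single_index
  simp

theorem phi_zero : S.phi 0 = 0 := by
  unfold phi; exact Finsupp.sum_zero_index

theorem phi_add (c c' : (Fin n → ℕ) →₀ R) : S.phi (c + c') = S.phi c + S.phi c' := by
  unfold phi
  apply Finsupp.sum_add_index
  · intros; simp
  · intros; rw [map_add, add_mul]

theorem phi_neg (c : (Fin n → ℕ) →₀ R) : S.phi (-c) = -S.phi c := by
  have := S.phi_add c (-c)
  rw [add_neg_cancel, S.phi_zero] at this
  exact (neg_eq_of_add_eq_zero_right this.symm).symm

theorem mono_zero : S.mono 0 = 1 :=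
  prod_all_zero (fun k m => S.x k ^ m) (fun i => pow_zero _) 0 (fun _ => rfl)

theorem mono_cons (i : Fin n) (α : Fin n → ℕ) (hmin : ∀ k, k < i → α k = 0) :
    S.mono (α + es i) = S.x i * S.mono α := by
  have h := prod_cons_of_min (fun k m => S.x k ^ m) (fun i => pow_zero _)
    (fun i a => show S.x i ^ (a+1) = S.x i ^ 1 * S.x i ^ a by rw [pow_succ', pow_one]) i α hmin
  exact h.trans (by show S.x i ^ 1 * S.mono α = S.x i * S.mono α; rw [pow_one])

theorem mono_es (i : Fin n) : S.mono (es i) = S.x i := by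
  have := S.mono_cons i 0 (fun _ _ => rfl)
  rw [zero_add, S.mono_zero, mul_one] at this
  exact this

theorem sigmaPow_zero (r : R) : S.sigmaPow 0 r = r := by
  have h : S.sigmaPow 0 = List.prod ((List.finRange n).map fun i => endPow (⇑(S.σ i)) 0) :=
    iterPow_eq_prod _ _
  exact congrFun (h.trans (prod_map_eq_one (M := Function.End R) _ (fun i => endPow_zero _))) r

theorem sigmaPow_cons (i : Fin n) (α : Fin n → ℕ) (hmin : ∀ k, k < i → α k = 0) (r : R) :
    S.sigmaPow (α + es i) r = S.σ i (S.sigmaPow α r) := by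
  have h1 : S.sigmaPow (α + es i) = List.prod ((List.finRange n).map fun k => endPow (⇑(S.σ k)) ((α + es i) k)) :=
    iterPow_eq_prod _ _
  have h2 : S.sigmaPow α = List.prod ((List.finRange n).map fun k => endPow (⇑(S.σ k)) (α k)) :=
    iterPow_eq_prod _ _
  have h := prod_cons_of_min (fun k m => endPow (⇑(S.σ k)) m) (fun i => endPow_zero _)
    (fun i a => endPow_succ _ _) i α hmin
  calc S.sigmaPow (α + es i) r
      = (endPow (⇑(S.σ i)) 1 *
          List.prod ((List.finRange n).map fun k => endPow (⇑(S.σ k)) (α k))) r :=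
        congrFun (h1.trans h) r
    _ = S.σ i (List.prod ((List.finRange n).map fun k => endPow (⇑(S.σ k)) (α k)) r) := rfl
    _ = S.σ i (S.sigmaPow α r) := by rw [← h2]

end SkewPBW

end SPWbasic

section SPWfilt

variable {R A : Type*} [Ring R] [Ring A] {n : ℕ}

namespace SkewPBW

variable (S : SkewPBW R A n)

/-- the filtration by total degree -/
def Fd (d : ℕ) : AddSubgroup A :=
  AddSubgroup.closure {z | ∃ r α, dg α ≤ d ∧ z = S.ι r * S.mono α}

theorem mem_Fd {d : ℕ} {α : Fin n → ℕ} (r : R) (h : dg α ≤ d) :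
    S.ι r * S.mono α ∈ S.Fd d :=
  AddSubgroup.subset_closure ⟨r, α, h, rfl⟩

theorem Fd_mono {d e : ℕ} (h : d ≤ e) : S.Fd d ≤ S.Fd e :=
  AddSubgroup.closure_mono (fun z ⟨r, α, hα, hz⟩ => ⟨r, α, le_trans hα h, hz⟩)

theorem iota_mul_Fd {d : ℕ} {z : A} (hz : z ∈ S.Fd d) (r : R) : S.ι r * z ∈ S.Fd d := by
  induction hz using AddSubgroup.closure_induction with
  | mem w hw =>
      obtain ⟨s, α, hα, rfl⟩ := hw
      rw [← mul_assoc, ← map_mul]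
      exact S.mem_Fd _ hα
  | zero => rw [mul_zero]; exact zero_mem _
  | add u v _ _ hu hv => rw [mul_add]; exact add_mem hu hv
  | neg u _ hu => rw [mul_neg]; exact neg_mem hu

theorem Fd_repr {d : ℕ} {z : A} (hz : z ∈ S.Fd d) :
    ∃ c : (Fin n → ℕ) →₀ R, S.phi c = z ∧ ∀ γ ∈ c.support, dg γ ≤ d := by
  induction hz using AddSubgroup.closure_induction with
  | mem w hw =>
      obtain ⟨s, α, hα, rfl⟩ := hw
      exact ⟨Finsupp.single α s, S.phi_single _ _, fun γ hγ => by
        rw [Finsupp.mem_support_iff] at hγ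
        rcases Finsupp.single_apply_ne_zero.1 hγ with ⟨h1, _⟩
        rw [h1]; exact hα⟩
  | zero => exact ⟨0, S.phi_zero, fun γ hγ => by simp at hγ⟩
  | add u v _ _ hu hv =>
      obtain ⟨c1, hc1, hs1⟩ := hu
      obtain ⟨c2, hc2, hs2⟩ := hv
      refine ⟨c1 + c2, by rw [S.phi_add, hc1, hc2], fun γ hγ => ?_⟩
      rcases Finset.mem_union.1 (Finsupp.support_add hγ) with h | h
      · exact hs1 γ h
      · exact hs2 γ h
  | neg u _ hu =>
      obtain ⟨c1, hc1, hs1⟩ := hu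
      exact ⟨-c1, by rw [S.phi_neg, hc1], fun γ hγ => hs1 γ (by simpa using hγ)⟩

theorem top_coeff_eq_zero {d : ℕ} {γ : Fin n → ℕ} {u : R} {z : A}
    (hd : d < dg γ) (hz : z ∈ S.Fd d) (heq : S.ι u * S.mono γ + z = 0) : u = 0 := by
  obtain ⟨c, hc, hs⟩ := S.Fd_repr hz
  have h0 : S.phi (Finsupp.single γ u + c) = 0 := by
    rw [S.phi_add, S.phi_single, hc, heq]
  have := S.phi_inj (h0.trans S.phi_zero.symm)
  have hγc : c γ = 0 := by
    by_contra hne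
    exact absurd (hs γ (Finsupp.mem_support_iff.2 hne)) (by omega)
  have happ := DFunLike.congr_fun this γ
  rw [Finsupp.add_apply, Finsupp.single_eq_same, hγc, add_zero, Finsupp.coe_zero, Pi.zero_apply] at happ
  exact happ

end SkewPBW

end SPWfilt

section SPWc

variable {R A : Type*} [Ring R] [Ring A] {n : ℕ}

namespace SkewPBW

variable (S : SkewPBW R A n)

theorem low_mem (r₀ : R) (r : Fin n → R) :
    S.ι r₀ + ∑ k, S.ι (r k) * S.x k ∈ S.Fd 1 := by
  apply add_mem
  · have : S.ι r₀ = S.ι r₀ * S.mono 0 := by rw [S.mono_zero, mul_one]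
    rw [this]
    exact S.mem_Fd _ (by simp [dg])
  · apply AddSubgroup.sum_mem
    intro k _
    have : S.x k = S.mono (es k) := (S.mono_es k).symm
    rw [this]
    exact S.mem_Fd _ (by rw [dg_es])

theorem quad' (i j : Fin n) : ∃ (r₀ : R) (r : Fin n → R),
    S.x j * S.x i = S.ι (S.c i j) * (S.x i * S.x j) + (S.ι r₀ + ∑ k, S.ι (r k) * S.x k) := by
  obtain ⟨r₀, r, h⟩ := S.quad i j
  exact ⟨r₀, r, by rw [← h]; abel⟩

theorem c_inv {p q : Fin n} (hpq : p < q) : S.c q p * S.c p q = 1 := by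
  obtain ⟨r₀, r, h1⟩ := S.quad' q p
  obtain ⟨s₀, s, h2⟩ := S.quad' p q
  set L1 := S.ι r₀ + ∑ k, S.ι (r k) * S.x k with hL1
  set L2 := S.ι s₀ + ∑ k, S.ι (s k) * S.x k with hL2
  -- h1 : x p * x q = ι (c q p) * (x q * x p) + L1
  -- h2 : x q * x p = ι (c p q) * (x p * x q) + L2
  have hcomb : S.x p * S.x q =
      S.ι (S.c q p * S.c p q) * (S.x p * S.x q) + (S.ι (S.c q p) * L2 + L1) := by
    conv_lhs => rw [h1, h2]
    rw [map_mul]; noncomm_ring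
  have hmonoq : S.mono (es q) = S.x q := S.mono_es q
  have hmono : S.mono (es q + es p) = S.x p * S.x q := by
    rw [S.mono_cons p (es q) (fun k hk => by
      simp only [es]
      rw [if_neg]
      exact Fin.ne_of_lt (lt_trans hk hpq)), hmonoq]
  have hz : S.ι (S.c q p) * L2 + L1 ∈ S.Fd 1 := by
    apply add_mem
    · exact S.iota_mul_Fd (S.low_mem s₀ s) _
    · exact S.low_mem r₀ r
  have h3 : S.x p * S.x q - S.ι (S.c q p * S.c p q) * (S.x p * S.x q)
      = S.ι (S.c q p) * L2 + L1 := sub_eq_iff_eq_add'.2 hcomb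
  have heq : S.ι (1 - S.c q p * S.c p q) * S.mono (es q + es p) +
      (-(S.ι (S.c q p) * L2 + L1)) = 0 := by
    rw [map_sub, map_one, sub_mul, one_mul, hmono, h3, add_neg_cancel]
  have hdg : (1 : ℕ) < dg (es q + es p) := by
    rw [dg_add, dg_es, dg_es]; omega
  have := S.top_coeff_eq_zero hdg (neg_mem hz) heq
  have : S.c q p * S.c p q = 1 := by
    have h := sub_eq_zero.1 this
    exact h.symm
  exact this

theorem c_isUnit (hc : S.CCentral) {p q : Fin n} (hpq : p ≠ q) : IsUnit (S.c p q) := by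
  rcases lt_or_gt_of_ne hpq with h | h
  · -- p < q : c q p * c p q = 1
    have h1 := S.c_inv h
    have h2 : S.c p q * S.c q p = 1 := by rw [← hc q p (S.c p q)]; exact h1
    exact ⟨⟨S.c p q, S.c q p, h2, h1⟩, rfl⟩
  · have h1 := S.c_inv h  -- c p q * c q p = 1
    have h2 : S.c q p * S.c p q = 1 := by rw [← hc p q (S.c q p)]; exact h1
    exact ⟨⟨S.c p q, S.c q p, h1, h2⟩, rfl⟩

end SkewPBW

end SPWc

section SPWkey

variable {R A : Type*} [Ring R] [Ring A] {n : ℕ}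

theorem exists_peel {n : ℕ} {α : Fin n → ℕ} (h : α ≠ 0) :
    ∃ (j : Fin n) (α' : Fin n → ℕ), α = α' + es j ∧ (∀ k, k < j → α' k = 0) ∧
      (∀ k, k < j → α k = 0) ∧ dg α = dg α' + 1 := by
  have hne : (Finset.univ.filter fun k => α k ≠ 0).Nonempty := by
    by_contra hempty
    rw [Finset.not_nonempty_iff_eq_empty] at hempty
    apply h
    funext k
    by_contra hk
    have : k ∈ Finset.univ.filter fun k => α k ≠ 0 := Finset.mem_filter.2 ⟨Finset.mem_univ _, hk⟩
    rw [hempty] at this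
    exact absurd this (Finset.notMem_empty _)
  set j := (Finset.univ.filter fun k => α k ≠ 0).min' hne with hj
  have hαj : α j ≠ 0 := (Finset.mem_filter.1 ((Finset.univ.filter fun k => α k ≠ 0).min'_mem hne)).2
  have hmin : ∀ k, k < j → α k = 0 := by
    intro k hk
    by_contra hkne
    have : j ≤ k := Finset.min'_le (Finset.univ.filter fun k => α k ≠ 0) k (Finset.mem_filter.2 ⟨Finset.mem_univ _, hkne⟩)
    exact absurd hk (not_lt.2 this)
  refine ⟨j, fun k => α k - es j k, ?_, ?_, hmin, ?_⟩
  · funext k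
    simp only [Pi.add_apply, es]
    rcases eq_or_ne k j with rfl | hkj
    · rw [if_pos rfl]; omega
    · rw [if_neg hkj]; omega
  · intro k hk
    simp only [es]
    rw [hmin k hk, if_neg (Fin.ne_of_lt hk)]
  · have : dg (fun k => α k - es j k) + dg (es j) = dg α := by
      rw [← dg_add]
      congr 1
      funext k
      simp only [Pi.add_apply, es]
      rcases eq_or_ne k j with rfl | hkj
      · rw [if_pos rfl]; omega
      · rw [if_neg hkj]; omega
    rw [dg_es] at this
    omega

namespace SkewPBW

variable (S : SkewPBW R A n)

theorem xmul_aux {e : ℕ}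
    (hP : ∀ β : Fin n → ℕ, dg β ≤ e → ∀ i, ∃ u E,
      S.x i * S.mono β = S.ι u * S.mono (β + es i) + E ∧ E ∈ S.Fd (dg β))
    {z : A} (hz : z ∈ S.Fd e) (i : Fin n) : S.x i * z ∈ S.Fd (e + 1) := by
  induction hz using AddSubgroup.closure_induction with
  | mem w hw =>
      obtain ⟨r, β, hβ, rfl⟩ := hw
      obtain ⟨u, E, hE, hmem⟩ := hP β hβ i
      have h1 : S.x i * (S.ι r * S.mono β) = (S.x i * S.ι r) * S.mono β := by rw [mul_assoc]
      rw [h1, S.comm i r, add_mul, mul_assoc, hE]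
      -- ι (σ i r) * (ι u * mono (β+es i) + E) + ι (δ i r) * mono β
      rw [mul_add, ← mul_assoc, ← map_mul]
      apply add_mem
      apply add_mem
      · exact S.mem_Fd _ (by rw [dg_add, dg_es]; omega)
      · exact (S.Fd_mono (by omega : dg β ≤ e + 1)) (S.iota_mul_Fd hmem _)
      · exact S.mem_Fd _ (by omega)
  | zero => rw [mul_zero]; exact zero_mem _
  | add u v _ _ hu hv => rw [mul_add]; exact add_mem hu hv
  | neg u _ hu => rw [mul_neg]; exact neg_mem hu

theorem keyP (hc : S.CCentral) (α : Fin n → ℕ) (i : Fin n) :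
    ∃ u E, IsUnit u ∧ S.x i * S.mono α = S.ι u * S.mono (α + es i) + E ∧ E ∈ S.Fd (dg α) := by
  suffices H : ∀ d (α : Fin n → ℕ), dg α ≤ d → ∀ i, ∃ u E, IsUnit u ∧
      S.x i * S.mono α = S.ι u * S.mono (α + es i) + E ∧ E ∈ S.Fd (dg α) from
    H (dg α) α le_rfl i
  intro d
  induction d with
  | zero =>
      intro α hα i
      have h0 : α = 0 := dg_eq_zero (by omega)
      subst h0
      refine ⟨1, 0, isUnit_one, ?_, zero_mem _⟩
      rw [map_one, one_mul, add_zero, S.mono_zero, mul_one, zero_add, S.mono_es]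
  | succ d ihd =>
      intro α hα i
      rcases Nat.lt_or_ge (dg α) (d+1) with hlt | hge
      · exact ihd α (by omega) i
      have hd : dg α = d + 1 := by omega
      have hα0 : α ≠ 0 := by
        intro h; rw [h] at hd; simp [dg] at hd
      obtain ⟨j, α', hpeel, hα'min, hαmin, hdg⟩ := exists_peel hα0
      have hdα' : dg α' = d := by omega
      have hmono : S.mono α = S.x j * S.mono α' := by
        rw [hpeel]; exact S.mono_cons j α' hα'min
      rcases le_or_gt i j with hij | hji
      · -- i ≤ j : x i * mono α = mono (α + es i)
        have hmin : ∀ k, k < i → α k = 0 := fun k hk => hαmin k (lt_of_lt_of_le hk hij)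
        refine ⟨1, 0, isUnit_one, ?_, zero_mem _⟩
        rw [map_one, one_mul, add_zero, S.mono_cons i α hmin]
      · -- j < i
        obtain ⟨u₁, E₁, hu₁, he₁, hm₁⟩ := ihd α' (by omega) i
        obtain ⟨r₀, r, hq⟩ := S.quad' j i
        have hxm : S.x j * S.mono (α' + es i) = S.mono (α + es i) := by
          have : ∀ k, k < j → (α' + es i) k = 0 := by
            intro k hk
            simp only [Pi.add_apply, es]
            rw [hα'min k hk, if_neg (Fin.ne_of_lt (lt_trans hk hji))]
          rw [← S.mono_cons j _ this]
          congr 1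
          rw [hpeel]
          funext k
          simp only [Pi.add_apply]
          omega
        set u := S.c j i * S.σ j u₁ with hu
        set E := S.ι (S.c j i) * (S.ι (S.δ j u₁) * S.mono (α' + es i)) +
          S.ι (S.c j i) * (S.x j * E₁) +
          (S.ι r₀ * S.mono α' + ∑ k, S.ι (r k) * (S.x k * S.mono α')) with hE
        refine ⟨u, E, (S.c_isUnit hc (Fin.ne_of_lt hji)).mul (hu₁.map (S.σ j)), ?_, ?_⟩
        · -- the equation
          have e1 : S.x i * S.mono α = (S.x i * S.x j) * S.mono α' := by
            rw [hmono, ← mul_assoc]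
          have e2 : (S.x i * S.x j) * S.mono α' =
              S.ι (S.c j i) * (S.x j * (S.x i * S.mono α')) +
                (S.ι r₀ * S.mono α' + ∑ k, S.ι (r k) * (S.x k * S.mono α')) := by
            rw [hq, add_mul, add_mul, Finset.sum_mul]
            congr 1
            · rw [mul_assoc, mul_assoc]
            congr 1
            apply Finset.sum_congr rfl
            intro k _
            rw [mul_assoc]
          have e3 : S.x j * (S.x i * S.mono α') =
              S.ι (S.σ j u₁) * S.mono (α + es i) +
                (S.ι (S.δ j u₁) * S.mono (α' + es i) + S.x j * E₁) := by
            rw [he₁, mul_add, ← mul_assoc, S.comm j u₁, add_mul, mul_assoc, hxm, add_assoc]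
          rw [e1, e2, e3, mul_add, ← mul_assoc, ← map_mul, hE, hu]
          rw [mul_add]
          ring_nf
          abel
        · -- membership
          rw [hE]
          have hxE₁ : S.x j * E₁ ∈ S.Fd (d + 1) := by
            have hP : ∀ β : Fin n → ℕ, dg β ≤ d → ∀ i, ∃ u E,
                S.x i * S.mono β = S.ι u * S.mono (β + es i) + E ∧ E ∈ S.Fd (dg β) := by
              intro β hβ i'
              obtain ⟨u', E', _, h1, h2⟩ := ihd β hβ i'
              exact ⟨u', E', h1, h2⟩
            exact S.xmul_aux hP (by rw [hdα'] at hm₁; exact hm₁) j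
          rw [hd]
          apply add_mem
          apply add_mem
          · rw [← mul_assoc, ← map_mul]
            exact S.mem_Fd _ (by rw [dg_add, dg_es]; omega)
          · exact S.iota_mul_Fd hxE₁ _
          · apply add_mem
            · exact S.mem_Fd _ (by omega)
            · apply AddSubgroup.sum_mem
              intro k _
              apply S.iota_mul_Fd
              have hP : ∀ β : Fin n → ℕ, dg β ≤ d → ∀ i, ∃ u E,
                  S.x i * S.mono β = S.ι u * S.mono (β + es i) + E ∧ E ∈ S.Fd (dg β) := by
                intro β hβ i'
                obtain ⟨u', E', _, h1, h2⟩ := ihd β hβ i'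
                exact ⟨u', E', h1, h2⟩
              have := S.xmul_aux hP (S.mem_Fd (α := α') 1 (le_of_eq hdα')) k
              rwa [map_one, one_mul] at this
end SkewPBW

end SPWkey

section SPWmain

variable {R A : Type*} [Ring R] [Ring A] {n : ℕ}

namespace SkewPBW

variable (S : SkewPBW R A n)

theorem xmul_Fd (hc : S.CCentral) {e : ℕ} {z : A} (hz : z ∈ S.Fd e) (i : Fin n) :
    S.x i * z ∈ S.Fd (e + 1) := by
  apply S.xmul_aux ?_ hz i
  intro β hβ i'
  obtain ⟨u', E', _, h1, h2⟩ := S.keyP hc β i'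
  exact ⟨u', E', h1, h2⟩

theorem Alem (hc : S.CCentral) (α : Fin n → ℕ) (r : R) :
    ∃ E, S.mono α * S.ι r = S.ι (S.sigmaPow α r) * S.mono α + E ∧
      E ∈ S.Fd (dg α - 1) ∧ (dg α = 0 → E = 0) := by
  suffices H : ∀ d (α : Fin n → ℕ), dg α ≤ d → ∀ r : R,
      ∃ E, S.mono α * S.ι r = S.ι (S.sigmaPow α r) * S.mono α + E ∧
        E ∈ S.Fd (dg α - 1) ∧ (dg α = 0 → E = 0) from H (dg α) α le_rfl r
  intro d
  induction d with
  | zero =>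
      intro α hα r
      have h0 : α = 0 := dg_eq_zero (by omega)
      subst h0
      refine ⟨0, ?_, zero_mem _, fun _ => rfl⟩
      rw [S.mono_zero, one_mul, mul_one, add_zero, S.sigmaPow_zero]
  | succ d ihd =>
      intro α hα r
      rcases Nat.lt_or_ge (dg α) (d+1) with hlt | hge
      · exact ihd α (by omega) r
      have hd : dg α = d + 1 := by omega
      have hα0 : α ≠ 0 := by intro h; rw [h] at hd; simp [dg] at hd
      obtain ⟨j, α', hpeel, hα'min, _, hdg⟩ := exists_peel hα0
      have hdα' : dg α' = d := by omega
      have hmono : S.mono α = S.x j * S.mono α' := by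
        rw [hpeel]; exact S.mono_cons j α' hα'min
      obtain ⟨E', he', hm', h0'⟩ := ihd α' (by omega) r
      have hsp : S.sigmaPow α r = S.σ j (S.sigmaPow α' r) := by
        rw [hpeel]; exact S.sigmaPow_cons j α' hα'min r
      refine ⟨S.ι (S.δ j (S.sigmaPow α' r)) * S.mono α' + S.x j * E', ?_, ?_, ?_⟩
      · rw [hmono, mul_assoc, he', mul_add, ← mul_assoc, S.comm j (S.sigmaPow α' r),
          add_mul, mul_assoc, ← hmono, hsp, add_assoc]
      · rw [hd]
        simp only [Nat.add_sub_cancel]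
        apply add_mem
        · exact S.mem_Fd _ (by omega)
        · rcases Nat.eq_zero_or_pos (dg α') with h0 | hpos
          · rw [h0' h0, mul_zero]; exact zero_mem _
          · have := S.xmul_Fd hc hm' j
            have hle : dg α' - 1 + 1 ≤ d := by omega
            exact (S.Fd_mono hle) this
      · intro h; omega

theorem Blem (hc : S.CCentral) (α β : Fin n → ℕ) :
    ∃ u E, IsUnit u ∧ S.mono α * S.mono β = S.ι u * S.mono (α + β) + E ∧
      E ∈ S.Fd (dg α + dg β - 1) ∧ (dg α + dg β = 0 → E = 0) := by
  suffices H : ∀ d (α : Fin n → ℕ), dg α ≤ d → ∀ β : Fin n → ℕ,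
      ∃ u E, IsUnit u ∧ S.mono α * S.mono β = S.ι u * S.mono (α + β) + E ∧
        E ∈ S.Fd (dg α + dg β - 1) ∧ (dg α + dg β = 0 → E = 0) from H (dg α) α le_rfl β
  intro d
  induction d with
  | zero =>
      intro α hα β
      have h0 : α = 0 := dg_eq_zero (by omega)
      subst h0
      refine ⟨1, 0, isUnit_one, ?_, zero_mem _, fun _ => rfl⟩
      rw [S.mono_zero, one_mul, map_one, one_mul, add_zero, zero_add]
  | succ d ihd =>
      intro α hα β
      rcases Nat.lt_or_ge (dg α) (d+1) with hlt | hge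
      · exact ihd α (by omega) β
      have hd : dg α = d + 1 := by omega
      have hα0 : α ≠ 0 := by intro h; rw [h] at hd; simp [dg] at hd
      obtain ⟨j, α', hpeel, hα'min, _, hdg⟩ := exists_peel hα0
      have hdα' : dg α' = d := by omega
      have hmono : S.mono α = S.x j * S.mono α' := by
        rw [hpeel]; exact S.mono_cons j α' hα'min
      obtain ⟨u', E', hu', he', hm', h0'⟩ := ihd α' (by omega) β
      obtain ⟨u₂, E₂, hu₂, he₂, hm₂⟩ := S.keyP hc (α' + β) j
      have hexp : α' + β + es j = α + β := by
        rw [hpeel]; funext k; simp only [Pi.add_apply]; omega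
      rw [hexp] at he₂
      refine ⟨S.σ j u' * u₂,
        S.ι (S.σ j u') * E₂ + (S.ι (S.δ j u') * S.mono (α' + β) + S.x j * E'), ?_, ?_, ?_, ?_⟩
      · exact (hu'.map (S.σ j)).mul hu₂
      · rw [hmono, mul_assoc, he', mul_add, ← mul_assoc, S.comm j u', add_mul,
          mul_assoc, he₂, mul_add, ← mul_assoc, ← map_mul]
        abel
      · have hD : dg α + dg β - 1 = dg α' + dg β := by
          rw [hd, hdα']; omega
        rw [hD]
        apply add_mem
        · apply S.iota_mul_Fd
          have : dg (α' + β) = dg α' + dg β := dg_add _ _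
          rw [← this]; exact hm₂
        apply add_mem
        · exact S.mem_Fd _ (le_of_eq (dg_add _ _))
        · rcases Nat.eq_zero_or_pos (dg α' + dg β) with h0 | hpos
          · rw [h0' h0, mul_zero]; exact zero_mem _
          · have := S.xmul_Fd hc hm' j
            exact (S.Fd_mono (by omega)) this
      · intro h; omega

theorem mul_mono_Fd (hc : S.CCentral) {e : ℕ} {z : A} (hz : z ∈ S.Fd e) (β : Fin n → ℕ) :
    z * S.mono β ∈ S.Fd (e + dg β) := by
  induction hz using AddSubgroup.closure_induction with
  | mem w hw =>
      obtain ⟨r, γ, hγ, rfl⟩ := hw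
      obtain ⟨u, E, _, he, hm, _⟩ := S.Blem hc γ β
      rw [mul_assoc, he, mul_add, ← mul_assoc, ← map_mul]
      apply add_mem
      · exact S.mem_Fd _ (by rw [dg_add]; omega)
      · apply S.iota_mul_Fd
        exact (S.Fd_mono (by omega)) hm
  | zero => rw [zero_mul]; exact zero_mem _
  | add u v _ _ hu hv => rw [add_mul]; exact add_mem hu hv
  | neg u _ hu => rw [neg_mul]; exact neg_mem hu

theorem prod_coeff_zero (hc : S.CCentral) (hSig : S.SigmaCompatible)
    {a b : R} {α β : Fin n → ℕ}
    (h : S.ι a * S.mono α * (S.ι b * S.mono β) = 0) : a * b = 0 := by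
  rcases Nat.eq_zero_or_pos (dg α + dg β) with hD0 | hDpos
  · -- degenerate case : α = β = 0
    have hα : α = 0 := dg_eq_zero (by omega)
    have hβ : β = 0 := dg_eq_zero (by omega)
    subst hα; subst hβ
    rw [S.mono_zero, mul_one, mul_one, ← map_mul] at h
    exact S.ι_inj (h.trans (map_zero S.ι).symm)
  · obtain ⟨EA, heA, hmA, h0A⟩ := S.Alem hc α b
    obtain ⟨u, EB, hu, heB, hmB, _⟩ := S.Blem hc α β
    set D := dg α + dg β with hD
    have key : S.ι (a * S.sigmaPow α b * u) * S.mono (α + β) +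
        (S.ι (a * S.sigmaPow α b) * EB + S.ι a * (EA * S.mono β)) = 0 := by
      have s1 : S.ι a * S.mono α * (S.ι b * S.mono β)
          = S.ι a * ((S.mono α * S.ι b) * S.mono β) := by noncomm_ring
      have s4 : S.ι a * ((S.mono α * S.ι b) * S.mono β)
          = S.ι (a * S.sigmaPow α b * u) * S.mono (α + β) +
            (S.ι (a * S.sigmaPow α b) * EB + S.ι a * (EA * S.mono β)) := by
        rw [heA, add_mul, mul_assoc (S.ι (S.sigmaPow α b)), heB]
        simp only [map_mul]
        noncomm_ring
      rw [← h, s1, s4]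
    have hz : S.ι (a * S.sigmaPow α b) * EB + S.ι a * (EA * S.mono β) ∈ S.Fd (D - 1) := by
      apply add_mem
      · exact S.iota_mul_Fd hmB _
      · rcases Nat.eq_zero_or_pos (dg α) with h0 | hpos
        · rw [h0A h0, zero_mul, mul_zero]; exact zero_mem _
        · apply S.iota_mul_Fd
          have := S.mul_mono_Fd hc hmA β
          exact (S.Fd_mono (by omega)) this
    have hdg : D - 1 < dg (α + β) := by rw [dg_add]; omega
    have hcoeff := S.top_coeff_eq_zero hdg hz key
    -- kill the unit u
    obtain ⟨U, rfl⟩ := hu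
    have this : a * S.sigmaPow α b = 0 := by
      have h2 : a * S.sigmaPow α b * (↑U * ↑(U⁻¹)) = 0 * (↑(U⁻¹) : R) := by
        rw [← mul_assoc, hcoeff]
      rwa [Units.mul_inv, mul_one, zero_mul] at h2
    exact (hSig a b α).1 this

end SkewPBW

end SPWmain

/-- Let `A` be a skew PBW extension of `R` with the constants `c_{i,j}`
of condition (iv) central in `R`, where `R` is `Σ`-compatible and `(Σ,Δ)`-skew
Armendariz.  If `f = Σᵢ aᵢXᵢ` and `g = Σⱼ bⱼYⱼ` in `A` satisfy `fg = 0`,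
then `aᵢ bⱼ = 0` in `R` for all `i, j`. -/
theorem sdSkewArmendariz_coeff_mul_eq_zero {R A : Type*} [Ring R] [Ring A] {n : ℕ}
    (S : SkewPBW R A n) (hc : S.CCentral)
    (hSig : S.SigmaCompatible) (hArm : S.SDSkewArmendariz)
    (m t : ℕ) (a : Fin (m + 1) → R) (X : Fin (m + 1) → Fin n → ℕ)
    (b : Fin (t + 1) → R) (Y : Fin (t + 1) → Fin n → ℕ)
    (hX : Function.Injective X) (hY : Function.Injective Y)
    (hfg : (∑ i, S.ι (a i) * S.mono (X i)) * (∑ j, S.ι (b j) * S.mono (Y j)) = 0) :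
    ∀ i j, a i * b j = 0 := by
  intro i j
  exact S.prod_coeff_zero hc hSig (hArm m t a X b Y hX hY hfg i j)
end

section
/- Let A = σ(R)⟨x_1,…,x_n⟩ be a skew PBW extension of a ring R with the elements c_{i,j} of condition (iv) central in R, and suppose R is Σ-compatible and (Σ,Δ)-skew Armendariz. If p_1, p_2, …, p_l are elements of A (l ≥ 2) with p_1 p_2 ⋯ p_l = 0, then for every choice of coefficients a_k ∈ C_{p_k} (k = 1, …, l), where C_p denotes the set of coefficients of p in its unique expansion in standard monomials, one has a_1 a_2 ⋯ a_l = 0 in R. -/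
open scoped BigOperators

namespace SkewPBWAux

open Finsupp

variable {R A : Type*} [Ring R] [Ring A] {n : ℕ}

/-- total degree of an exponent vector -/
def deg {n : ℕ} (γ : Fin n → ℕ) : ℕ := ∑ i, γ i

/-- basis exponent vector `e j` -/
def unit {n : ℕ} (j : Fin n) : Fin n → ℕ := fun i => if i = j then 1 else 0

lemma unit_apply_self (j : Fin n) : unit j j = 1 := by simp [unit]

lemma unit_apply_ne {i j : Fin n} (h : i ≠ j) : unit j i = 0 := by simp [unit, h]

lemma deg_add (γ μ : Fin n → ℕ) : deg (γ + μ) = deg γ + deg μ := by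
  simp [deg, Finset.sum_add_distrib]

lemma deg_unit (j : Fin n) : deg (unit j) = 1 := by simp [deg, unit]

lemma deg_eq_zero {γ : Fin n → ℕ} (h : deg γ = 0) : γ = 0 := by
  funext i
  exact (Finset.sum_eq_zero_iff.mp h) i (Finset.mem_univ i)

/-- decomposition of a nonzero exponent vector at its maximal index -/
lemma exists_max {γ : Fin n → ℕ} (h : γ ≠ 0) :
    ∃ (j : Fin n) (γ' : Fin n → ℕ), γ' + unit j = γ ∧ deg γ' + 1 = deg γ ∧
      (∀ i, j < i → γ' i = 0) ∧ (∀ i, j < i → γ i = 0) := by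
  have hne : (Finset.univ.filter fun i => γ i ≠ 0).Nonempty := by
    by_contra hc
    rw [Finset.not_nonempty_iff_eq_empty] at hc
    apply h
    funext i
    show γ i = 0
    by_contra hi
    have : i ∈ Finset.univ.filter fun i => γ i ≠ 0 := by simp [hi]
    simp [hc] at this
  set j := (Finset.univ.filter fun i => γ i ≠ 0).max' hne with hj
  have hjmem : γ j ≠ 0 := by
    have := (Finset.univ.filter fun i => γ i ≠ 0).max'_mem hne
    simpa using this
  have hmax : ∀ i, j < i → γ i = 0 := by
    intro i hi
    by_contra hgi
    have : i ∈ Finset.univ.filter fun i => γ i ≠ 0 := by simp [hgi]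
    exact absurd (Finset.le_max' _ i this) (not_le.mpr hi)
  refine ⟨j, Function.update γ j (γ j - 1), ?_, ?_, ?_, hmax⟩
  · funext i
    by_cases hij : i = j
    · subst hij
      simp [unit, Function.update_self]
      omega
    · simp [unit, hij, Function.update_of_ne hij]
  · have : γ = Function.update γ j (γ j - 1) + unit j := by
      funext i
      by_cases hij : i = j
      · subst hij; simp [unit, Function.update_self]; omega
      · simp [unit, hij, Function.update_of_ne hij]
    rw [show deg γ = deg (Function.update γ j (γ j - 1) + unit j) from by rw [← this],
      deg_add, deg_unit]
  · intro i hi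
    rw [Function.update_of_ne (ne_of_gt hi)]
    exact hmax i hi

lemma mem_take_finRange {m : ℕ} {i : Fin n} (h : i ∈ (List.finRange n).take m) : i.val < m := by
  obtain ⟨k, hk, he⟩ := List.mem_iff_getElem.mp h
  simp only [List.length_take, List.length_finRange, lt_min_iff] at hk
  rw [← he]
  simp [List.getElem_take, List.getElem_finRange]
  omega

lemma mem_drop_finRange {m : ℕ} {i : Fin n} (h : i ∈ (List.finRange n).drop m) : m ≤ i.val := by
  obtain ⟨k, hk, he⟩ := List.mem_iff_getElem.mp h
  rw [← he]
  simp [List.getElem_drop, List.getElem_finRange]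

end SkewPBWAux

namespace SkewPBWAux

variable {R A : Type*} [Ring R] [Ring A] {n : ℕ}

/-- partial standard monomial, over the first `m` variables -/
def pmono (S : SkewPBW R A n) (m : ℕ) (γ : Fin n → ℕ) : A :=
  (((List.finRange n).take m).map fun i => S.x i ^ γ i).prod

lemma mono_eq_pmono (S : SkewPBW R A n) {m : ℕ} (γ : Fin n → ℕ)
    (h : ∀ i : Fin n, m ≤ i.val → γ i = 0) : S.mono γ = pmono S m γ := by
  rw [SkewPBW.mono, ← List.take_append_drop m (List.finRange n), List.map_append,
    List.prod_append]
  have : (((List.finRange n).drop m).map fun i => S.x i ^ γ i).prod = 1 := by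
    apply List.prod_eq_one
    intro a ha
    obtain ⟨i, hi, rfl⟩ := List.mem_map.mp ha
    rw [h i (mem_drop_finRange hi), pow_zero]
  rw [this, mul_one]
  rfl

lemma pmono_succ (S : SkewPBW R A n) {m : ℕ} (hm : m < n) (γ : Fin n → ℕ) :
    pmono S (m + 1) γ = pmono S m γ * S.x ⟨m, hm⟩ ^ γ ⟨m, hm⟩ := by
  rw [pmono, List.take_succ, List.map_append, List.prod_append]
  congr 1
  have h1 : (List.finRange n)[m]? = some ⟨m, hm⟩ := by
    rw [List.getElem?_eq_getElem (by simp [List.length_finRange]; omega)]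
    simp [List.getElem_finRange]
  rw [h1]
  simp

lemma pmono_congr (S : SkewPBW R A n) {m : ℕ} {γ μ : Fin n → ℕ}
    (h : ∀ i : Fin n, i.val < m → γ i = μ i) : pmono S m γ = pmono S m μ := by
  rw [pmono, pmono]
  congr 1
  apply List.map_congr_left
  intro i hi
  rw [h i (mem_take_finRange hi)]

lemma mono_zero (S : SkewPBW R A n) : S.mono 0 = 1 := by
  rw [mono_eq_pmono S (m := 0) 0 (fun i _ => rfl)]
  simp [pmono]

lemma mono_mul_x (S : SkewPBW R A n) {γ : Fin n → ℕ} {j : Fin n}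
    (h : ∀ i, j < i → γ i = 0) : S.mono γ * S.x j = S.mono (γ + unit j) := by
  have hj1 : ∀ i : Fin n, j.val + 1 ≤ i.val → γ i = 0 := fun i hi =>
    h i (by rwa [Fin.lt_def, ← Nat.succ_le_iff])
  have hj2 : ∀ i : Fin n, j.val + 1 ≤ i.val → (γ + unit j) i = 0 := by
    intro i hi
    have hij : i ≠ j := by intro hij; subst hij; omega
    simp [hj1 i hi, unit_apply_ne hij]
  rw [mono_eq_pmono S γ hj1, mono_eq_pmono S _ hj2,
    pmono_succ S j.isLt, pmono_succ S j.isLt]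
  have he : (⟨j.val, j.isLt⟩ : Fin n) = j := rfl
  rw [he]
  have hc : pmono S j.val (γ + unit j) = pmono S j.val γ := by
    apply pmono_congr
    intro i hi
    have hij : i ≠ j := by intro hij; subst hij; omega
    simp [unit_apply_ne hij]
  rw [hc, Pi.add_apply, unit_apply_self, pow_succ, mul_assoc]

lemma mono_unit (S : SkewPBW R A n) (j : Fin n) : S.mono (unit j) = S.x j := by
  have := mono_mul_x S (γ := 0) (j := j) (fun i _ => rfl)
  rw [mono_zero, one_mul, zero_add] at this
  exact this.symm

/-! ### composition folds -/

def comps {α : Type*} (L : List (α → α)) : α → α := L.foldr (· ∘ ·) id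

lemma comps_nil {α : Type*} : comps ([] : List (α → α)) = id := rfl

lemma comps_cons {α : Type*} (f : α → α) (L : List (α → α)) :
    comps (f :: L) = f ∘ comps L := rfl

lemma comps_append {α : Type*} (L1 L2 : List (α → α)) :
    comps (L1 ++ L2) = comps L1 ∘ comps L2 := by
  induction L1 with
  | nil => rfl
  | cons f L ih => rw [List.cons_append, comps_cons, comps_cons, ih]; rfl

lemma comps_eq_id {α : Type*} {L : List (α → α)} (h : ∀ g ∈ L, g = id) : comps L = id := by
  induction L with
  | nil => rfl
  | cons f L ih =>
    rw [comps_cons, h f (by simp), ih (fun g hg => h g (by simp [hg]))]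
    rfl

/-- partial iterated power -/
def pIter {α : Type*} (f : Fin n → α → α) (m : ℕ) (k : Fin n → ℕ) : α → α :=
  comps (((List.finRange n).take m).map fun i => (f i)^[k i])

lemma iterPow_eq_pIter {α : Type*} {f : Fin n → α → α} {m : ℕ} {k : Fin n → ℕ}
    (h : ∀ i : Fin n, m ≤ i.val → k i = 0) : iterPow f k = pIter f m k := by
  show comps _ = _
  rw [← List.take_append_drop m (List.finRange n), List.map_append, comps_append]
  have : comps (((List.finRange n).drop m).map fun i => (f i)^[k i]) = id := by
    apply comps_eq_id
    intro g hg
    obtain ⟨i, hi, rfl⟩ := List.mem_map.mp hg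
    rw [h i (mem_drop_finRange hi), Function.iterate_zero]
  rw [this]
  rfl

lemma pIter_succ {α : Type*} (f : Fin n → α → α) {m : ℕ} (hm : m < n) (k : Fin n → ℕ) :
    pIter f (m + 1) k = pIter f m k ∘ (f ⟨m, hm⟩)^[k ⟨m, hm⟩] := by
  rw [pIter, List.take_succ, List.map_append, comps_append]
  have h1 : (List.finRange n)[m]? = some ⟨m, hm⟩ := by
    rw [List.getElem?_eq_getElem (by simp [List.length_finRange]; omega)]
    simp [List.getElem_finRange]
  rw [h1]
  rfl

lemma pIter_congr {α : Type*} (f : Fin n → α → α) {m : ℕ} {k k' : Fin n → ℕ}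
    (h : ∀ i : Fin n, i.val < m → k i = k' i) : pIter f m k = pIter f m k' := by
  have he : ((List.finRange n).take m).map (fun i => (f i)^[k i]) =
      ((List.finRange n).take m).map (fun i => (f i)^[k' i]) :=
    List.map_congr_left (fun i hi => by rw [h i (mem_take_finRange hi)])
  rw [pIter, pIter, he]

lemma iterPow_zero {α : Type*} (f : Fin n → α → α) : iterPow f 0 = id :=
  iterPow_eq_pIter (m := 0) (fun _ _ => rfl)

lemma iterPow_add_unit {α : Type*} {f : Fin n → α → α} {k : Fin n → ℕ} {j : Fin n}
    (h : ∀ i, j < i → k i = 0) : iterPow f (k + unit j) = iterPow f k ∘ f j := by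
  have hj1 : ∀ i : Fin n, j.val + 1 ≤ i.val → k i = 0 := fun i hi =>
    h i (by rwa [Fin.lt_def, ← Nat.succ_le_iff])
  have hj2 : ∀ i : Fin n, j.val + 1 ≤ i.val → (k + unit j) i = 0 := by
    intro i hi
    have hij : i ≠ j := by intro hij; subst hij; omega
    simp [hj1 i hi, unit_apply_ne hij]
  rw [iterPow_eq_pIter hj1, iterPow_eq_pIter hj2,
    pIter_succ f j.isLt, pIter_succ f j.isLt]
  have he : (⟨j.val, j.isLt⟩ : Fin n) = j := rfl
  rw [he]
  have hc : pIter f j.val (k + unit j) = pIter f j.val k := by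
    apply pIter_congr
    intro i hi
    have hij : i ≠ j := by intro hij; subst hij; omega
    simp [unit_apply_ne hij]
  rw [hc, Pi.add_apply, unit_apply_self, Function.iterate_succ, Function.comp_assoc]

end SkewPBWAux

namespace SkewPBWAux

open Finsupp

variable {R A : Type*} [Ring R] [Ring A] {n : ℕ}

/-- the `R`-linear expansion map onto the standard basis -/
def T (S : SkewPBW R A n) (c : (Fin n → ℕ) →₀ R) : A :=
  c.sum fun γ r => S.ι r * S.mono γ

lemma T_inj (S : SkewPBW R A n) : Function.Injective (T S) := S.free.1

lemma T_surj (S : SkewPBW R A n) : Function.Surjective (T S) := S.free.2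

lemma T_single (S : SkewPBW R A n) (γ : Fin n → ℕ) (r : R) :
    T S (Finsupp.single γ r) = S.ι r * S.mono γ :=
  Finsupp.sum_single_index (by simp)

lemma T_zero (S : SkewPBW R A n) : T S 0 = 0 := Finsupp.sum_zero_index

lemma T_add (S : SkewPBW R A n) (c c' : (Fin n → ℕ) →₀ R) :
    T S (c + c') = T S c + T S c' :=
  Finsupp.sum_add_index' (fun _ => by simp) (fun _ b₁ b₂ => by rw [map_add, add_mul])

/-- `T` as an additive monoid hom -/
noncomputable def Thom (S : SkewPBW R A n) : ((Fin n → ℕ) →₀ R) →+ A :=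
  AddMonoidHom.mk' (T S) (fun a b => T_add S a b)

lemma T_sum (S : SkewPBW R A n) {ι' : Type*} (s : Finset ι') (f : ι' → (Fin n → ℕ) →₀ R) :
    T S (∑ i ∈ s, f i) = ∑ i ∈ s, T S (f i) :=
  map_sum (Thom S) f s

lemma T_eq_sum_support (S : SkewPBW R A n) (c : (Fin n → ℕ) →₀ R) :
    T S c = ∑ γ ∈ c.support, S.ι (c γ) * S.mono γ := rfl

lemma ι_mul_T (S : SkewPBW R A n) (r : R) (c : (Fin n → ℕ) →₀ R) :
    S.ι r * T S c = T S (c.mapRange (r * ·) (mul_zero r)) := by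
  rw [T, T, Finsupp.mul_sum]
  rw [Finsupp.sum_mapRange_index (fun _ => by simp)]
  apply Finsupp.sum_congr
  intro γ _
  rw [← mul_assoc, ← map_mul]

lemma eq_zero_of_T_eq_zero (S : SkewPBW R A n) {c : (Fin n → ℕ) →₀ R}
    (h : T S c = 0) : c = 0 :=
  T_inj S (by rw [h, T_zero])

end SkewPBWAux

namespace SkewPBWAux

open Finsupp

variable {R A : Type*} [Ring R] [Ring A] {n : ℕ}

lemma sigmaPow_add_unit (S : SkewPBW R A n) {α : Fin n → ℕ} {j : Fin n}
    (h : ∀ i, j < i → α i = 0) (b : R) :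
    S.sigmaPow (α + unit j) b = S.sigmaPow α (S.σ j b) := by
  rw [SkewPBW.sigmaPow, SkewPBW.sigmaPow, iterPow_add_unit h]
  rfl

lemma sigmaPow_zero (S : SkewPBW R A n) (b : R) : S.sigmaPow 0 b = b := by
  rw [SkewPBW.sigmaPow, iterPow_zero]
  rfl

lemma T_mul_x_of_le (S : SkewPBW R A n) {q : (Fin n → ℕ) →₀ R} {j : Fin n}
    (h : ∀ μ ∈ q.support, ∀ i, j < i → μ i = 0) :
    T S q * S.x j = T S (q.sum fun μ r => Finsupp.single (μ + unit j) r) := by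
  rw [T_eq_sum_support, Finset.sum_mul]
  rw [show (q.sum fun μ r => Finsupp.single (μ + unit j) r)
      = ∑ μ ∈ q.support, Finsupp.single (μ + unit j) (q μ) from rfl, T_sum]
  apply Finset.sum_congr rfl
  intro μ hμ
  rw [T_single, mul_assoc, mono_mul_x S (h μ hμ)]

lemma support_sum_shift {q : (Fin n → ℕ) →₀ R} {j : Fin n} {ν : Fin n → ℕ}
    (hν : ν ∈ (q.sum fun μ r => Finsupp.single (μ + unit j) r).support) :
    ∃ μ ∈ q.support, ν = μ + unit j := by
  have := Finsupp.support_sum hν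
  obtain ⟨μ, hμ, hν'⟩ := Finset.mem_biUnion.mp this
  exact ⟨μ, hμ, by simpa using Finsupp.support_single_subset hν'⟩

/-- Fundamental expansion: `x^α b = σ^α(b) x^α + (lower terms)`. -/
lemma expand (S : SkewPBW R A n) :
    ∀ (d : ℕ) (α : Fin n → ℕ), deg α ≤ d → ∀ b : R,
    ∃ q : (Fin n → ℕ) →₀ R,
      (∀ μ ∈ q.support, (∀ i, μ i ≤ α i) ∧ deg μ < deg α) ∧
      S.mono α * S.ι b = S.ι (S.sigmaPow α b) * S.mono α + T S q := by
  intro d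
  induction d with
  | zero =>
    intro α hα b
    have h0 : α = 0 := deg_eq_zero (Nat.le_zero.mp hα)
    subst h0
    exact ⟨0, by simp, by rw [mono_zero, sigmaPow_zero, T_zero, one_mul, mul_one, add_zero]⟩
  | succ d ih =>
    intro α hα b
    by_cases h0 : α = 0
    · subst h0
      exact ⟨0, by simp, by rw [mono_zero, sigmaPow_zero, T_zero, one_mul, mul_one, add_zero]⟩
    obtain ⟨j, γ', hsum, hdeg, hγ', hγ⟩ := exists_max h0
    have hdγ' : deg γ' ≤ d := by omega
    obtain ⟨q₁, hs₁, e₁⟩ := ih γ' hdγ' (S.σ j b)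
    obtain ⟨q₂, hs₂, e₂⟩ := ih γ' hdγ' (S.δ j b)
    have hmono : S.mono γ' * S.x j = S.mono α := by rw [mono_mul_x S hγ', hsum]
    have hsig : S.sigmaPow γ' (S.σ j b) = S.sigmaPow α b := by
      rw [← hsum, sigmaPow_add_unit S hγ']
    have hq₁le : ∀ μ ∈ q₁.support, ∀ i, j < i → μ i = 0 := by
      intro μ hμ i hi
      have h1 := (hs₁ μ hμ).1 i
      rw [hγ' i hi] at h1
      omega
    refine ⟨(q₁.sum fun μ r => Finsupp.single (μ + unit j) r)
        + Finsupp.single γ' (S.sigmaPow γ' (S.δ j b)) + q₂, ?_, ?_⟩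
    · intro ν hν
      have hle : ∀ i, γ' i ≤ α i := by
        intro i; rw [← hsum]; simp [Pi.add_apply]
      have hdle : deg γ' < deg α := by omega
      rcases Finset.mem_union.mp (Finsupp.support_add hν) with hν | hν
      · rcases Finset.mem_union.mp (Finsupp.support_add hν) with hν | hν
        · obtain ⟨μ, hμ, rfl⟩ := support_sum_shift hν
          constructor
          · intro i
            rw [← hsum]
            exact Nat.add_le_add ((hs₁ μ hμ).1 i) le_rfl
          · rw [deg_add, deg_unit, ← hdeg]
            exact Nat.add_lt_add_right ((hs₁ μ hμ).2) 1
        · have : ν = γ' := by simpa using Finsupp.support_single_subset hν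
          subst this
          exact ⟨hle, hdle⟩
      · exact ⟨fun i => ((hs₂ ν hν).1 i).trans (hle i), (hs₂ ν hν).2.trans hdle⟩
    · calc S.mono α * S.ι b = S.mono γ' * (S.x j * S.ι b) := by
            rw [← hmono, mul_assoc]
        _ = S.mono γ' * (S.ι (S.σ j b) * S.x j + S.ι (S.δ j b)) := by rw [S.comm]
        _ = (S.mono γ' * S.ι (S.σ j b)) * S.x j + S.mono γ' * S.ι (S.δ j b) := by
            rw [mul_add, mul_assoc]
        _ = (S.ι (S.sigmaPow γ' (S.σ j b)) * S.mono γ' + T S q₁) * S.x j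
            + (S.ι (S.sigmaPow γ' (S.δ j b)) * S.mono γ' + T S q₂) := by rw [← e₁, ← e₂]
        _ = S.ι (S.sigmaPow α b) * S.mono α
            + (T S (q₁.sum fun μ r => Finsupp.single (μ + unit j) r)
              + T S (Finsupp.single γ' (S.sigmaPow γ' (S.δ j b))) + T S q₂) := by
            rw [add_mul, mul_assoc, hmono, hsig, T_mul_x_of_le S hq₁le, T_single]
            abel
        _ = _ := by rw [← T_add, ← T_add]

/-- If `a · x^α b = 0` then `a σ^α(b) = 0`. -/
lemma coeff_lemma (S : SkewPBW R A n) {a b : R} {α : Fin n → ℕ}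
    (h : S.ι a * (S.mono α * S.ι b) = 0) : a * S.sigmaPow α b = 0 := by
  obtain ⟨q, hsupp, he⟩ := expand S (deg α) α le_rfl b
  rw [he, mul_add, ← mul_assoc, ← map_mul, ι_mul_T] at h
  have h2 : T S (Finsupp.single α (a * S.sigmaPow α b)
      + q.mapRange (a * ·) (mul_zero a)) = 0 := by
    rw [T_add, T_single]
    exact h
  have h4 := DFunLike.congr_fun (eq_zero_of_T_eq_zero S h2) α
  simp only [Finsupp.add_apply, Finsupp.single_eq_same, Finsupp.mapRange_apply,
    Finsupp.coe_zero, Pi.zero_apply] at h4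
  have hqα : q α = 0 := by
    by_contra hq
    exact absurd (hsupp α (Finsupp.mem_support_iff.mpr hq)).2 (lt_irrefl _)
  rw [hqα, mul_zero, add_zero] at h4
  exact h4

end SkewPBWAux

namespace SkewPBWAux

open Finsupp

variable {R A : Type*} [Ring R] [Ring A] {n : ℕ}

/-- packaging degree-`≤ 1` elements -/
lemma deg_le_one_pack (S : SkewPBW R A n) (r0 : R) (rr : Fin n → R) :
    ∃ L : (Fin n → ℕ) →₀ R, (∀ ν ∈ L.support, deg ν ≤ 1) ∧
      S.ι r0 + ∑ m, S.ι (rr m) * S.x m = T S L := by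
  refine ⟨Finsupp.single 0 r0 + ∑ m, Finsupp.single (unit m) (rr m), ?_, ?_⟩
  · intro ν hν
    rcases Finset.mem_union.mp (Finsupp.support_add hν) with hν | hν
    · have : ν = 0 := by simpa using Finsupp.support_single_subset hν
      simp [this, deg]
    · have := Finset.mem_biUnion.mp (Finsupp.support_finset_sum hν)
      obtain ⟨m, _, hν'⟩ := this
      have : ν = unit m := by simpa using Finsupp.support_single_subset hν'
      simp [this, deg_unit]
  · rw [T_add, T_single, T_sum, mono_zero, mul_one]
    congr 1
    apply Finset.sum_congr rfl
    intro m _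
    rw [T_single, mono_unit]

lemma x_mul_x (S : SkewPBW R A n) {j k : Fin n} (hjk : j < k) :
    S.x j * S.x k = S.mono (unit j + unit k) := by
  have h := mono_mul_x S (γ := unit j) (j := k)
    (fun i hi => unit_apply_ne (by intro he; subst he; exact absurd (hjk.trans hi) (lt_irrefl _)))
  rw [mono_unit] at h
  exact h

lemma isUnit_c (S : SkewPBW R A n) (hc : S.CCentral) {j k : Fin n} (hjk : j < k) :
    IsUnit (S.c j k) := by
  obtain ⟨r0, rr, hq1⟩ := S.quad j k
  obtain ⟨s0, ss, hq2⟩ := S.quad k j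
  obtain ⟨L1, hL1s, hL1⟩ := deg_le_one_pack S r0 rr
  obtain ⟨L2, hL2s, hL2⟩ := deg_le_one_pack S s0 ss
  rw [hL1, sub_eq_iff_eq_add'] at hq1
  rw [hL2, sub_eq_iff_eq_add'] at hq2
  set u : Fin n → ℕ := unit j + unit k with hu
  have hL3 : S.x j * S.x k
      = S.ι (S.c k j * S.c j k) * (S.x j * S.x k)
        + T S (L1.mapRange (S.c k j * ·) (mul_zero _) + L2) := by
    rw [T_add, ← ι_mul_T]
    calc S.x j * S.x k = S.ι (S.c k j) * (S.x k * S.x j) + T S L2 := hq2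
      _ = S.ι (S.c k j) * (S.ι (S.c j k) * (S.x j * S.x k) + T S L1) + T S L2 := by rw [← hq1]
      _ = _ := by rw [mul_add, ← mul_assoc, ← map_mul]; abel
  have hxm : S.x j * S.x k = S.mono u := x_mul_x S hjk
  have hTT : T S (Finsupp.single u 1)
      = T S (Finsupp.single u (S.c k j * S.c j k)
          + (L1.mapRange (S.c k j * ·) (mul_zero _) + L2)) := by
    rw [T_single, map_one, one_mul, T_add, T_single, ← hxm]
    exact hL3
  have heq := DFunLike.congr_fun (T_inj S hTT) u
  have hu2 : deg u = 2 := by rw [hu, deg_add, deg_unit, deg_unit]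
  have hnot : (L1.mapRange (S.c k j * ·) (mul_zero _) + L2) u = 0 := by
    by_contra hne
    have hmem := Finsupp.mem_support_iff.mpr hne
    rcases Finset.mem_union.mp (Finsupp.support_add hmem) with hm | hm
    · have := hL1s u (Finsupp.support_mapRange hm)
      omega
    · have := hL2s u hm
      omega
  rw [Finsupp.add_apply, Finsupp.single_eq_same, Finsupp.single_eq_same, hnot, add_zero] at heq
  exact ⟨⟨S.c j k, S.c k j, by rw [hc j k (S.c k j)]; exact heq.symm, heq.symm⟩, rfl⟩

end SkewPBWAux

namespace SkewPBWAux

open Finsupp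

variable {R A : Type*} [Ring R] [Ring A] {n : ℕ}

lemma comps_coe_ringHom (L : List (R →+* R)) :
    comps (L.map fun f => DFunLike.coe f) = ⇑(L.foldr (fun f g => f.comp g) (RingHom.id R)) := by
  induction L with
  | nil => rfl
  | cons f L ih => rw [List.map_cons, comps_cons, ih]; rfl

lemma sigmaPow_eq_ringHom (S : SkewPBW R A n) (α : Fin n → ℕ) :
    S.sigmaPow α = ⇑(((List.finRange n).map fun i => S.σ i ^ α i).foldr
      (fun f g => f.comp g) (RingHom.id R)) := by
  rw [SkewPBW.sigmaPow]
  show comps _ = _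
  rw [← comps_coe_ringHom, List.map_map]
  congr 1


lemma isUnit_sigmaPow (S : SkewPBW R A n) {a : R} (h : IsUnit a) (α : Fin n → ℕ) :
    IsUnit (S.sigmaPow α a) := by
  rw [sigmaPow_eq_ringHom]
  exact h.map _

/-- elements supported on monomials of degree `< m` -/
def Bdd (S : SkewPBW R A n) (m : ℕ) (p : A) : Prop :=
  ∃ q : (Fin n → ℕ) →₀ R, (∀ μ ∈ q.support, deg μ < m) ∧ p = T S q

lemma Bdd.zero (S : SkewPBW R A n) (m : ℕ) : Bdd S m 0 :=
  ⟨0, by simp, (T_zero S).symm⟩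

lemma Bdd.add {S : SkewPBW R A n} {m : ℕ} {p p' : A} (h : Bdd S m p) (h' : Bdd S m p') :
    Bdd S m (p + p') := by
  obtain ⟨q, hq, rfl⟩ := h
  obtain ⟨q', hq', rfl⟩ := h'
  refine ⟨q + q', ?_, (T_add S q q').symm⟩
  intro μ hμ
  rcases Finset.mem_union.mp (Finsupp.support_add hμ) with hμ | hμ
  exacts [hq μ hμ, hq' μ hμ]

lemma Bdd.mono_le {S : SkewPBW R A n} {m m' : ℕ} {p : A} (hm : m ≤ m') (h : Bdd S m p) :
    Bdd S m' p := by
  obtain ⟨q, hq, rfl⟩ := h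
  exact ⟨q, fun μ hμ => lt_of_lt_of_le (hq μ hμ) hm, rfl⟩

lemma Bdd.ι_mul {S : SkewPBW R A n} {m : ℕ} {p : A} (r : R) (h : Bdd S m p) :
    Bdd S m (S.ι r * p) := by
  obtain ⟨q, hq, rfl⟩ := h
  exact ⟨q.mapRange (r * ·) (mul_zero r),
    fun μ hμ => hq μ (Finsupp.support_mapRange hμ), ι_mul_T S r q⟩

lemma Bdd.smono {S : SkewPBW R A n} {m : ℕ} {μ : Fin n → ℕ} (r : R) (h : deg μ < m) :
    Bdd S m (S.ι r * S.mono μ) := by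
  refine ⟨Finsupp.single μ r, ?_, (T_single S μ r).symm⟩
  intro ν hν
  have : ν = μ := by simpa using Finsupp.support_single_subset hν
  subst this; exact h

lemma Bdd.sum {S : SkewPBW R A n} {m : ℕ} {ι' : Type*} {s : Finset ι'} {f : ι' → A}
    (h : ∀ i ∈ s, Bdd S m (f i)) : Bdd S m (∑ i ∈ s, f i) :=
  Finset.sum_induction f (Bdd S m) (fun _ _ => Bdd.add) (Bdd.zero S m) h

lemma Bdd.ofT {S : SkewPBW R A n} {m : ℕ} {q : (Fin n → ℕ) →₀ R}
    (h : ∀ μ ∈ q.support, deg μ < m) : Bdd S m (T S q) := ⟨q, h, rfl⟩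

/-- Reordering: `x^γ x_j = C x^{γ+e_j} + (lower terms)` with `C` invertible. -/
lemma reorder (S : SkewPBW R A n) (hc : S.CCentral) :
    ∀ (d : ℕ) (γ : Fin n → ℕ), deg γ ≤ d → ∀ j : Fin n,
    ∃ (C : R) (p : A), IsUnit C ∧ Bdd S (deg γ + 1) p ∧
      S.mono γ * S.x j = S.ι C * S.mono (γ + unit j) + p := by
  intro d
  induction d with
  | zero =>
    intro γ hγ j
    have h0 : γ = 0 := deg_eq_zero (Nat.le_zero.mp hγ)
    subst h0
    exact ⟨1, 0, isUnit_one, Bdd.zero S _, by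
      rw [mono_zero, map_one, one_mul, one_mul, zero_add, add_zero, mono_unit]⟩
  | succ d ih =>
    intro γ hγd j
    by_cases h0 : γ = 0
    · subst h0
      exact ⟨1, 0, isUnit_one, Bdd.zero S _, by
        rw [mono_zero, map_one, one_mul, one_mul, zero_add, add_zero, mono_unit]⟩
    obtain ⟨k, γ', hsum, hdeg, hγ'max, hγmax⟩ := exists_max h0
    have hdγ' : deg γ' ≤ d := by omega
    -- multiplication by a variable preserves Bdd (key sub-lemma)
    have key : ∀ (m : ℕ), m ≤ deg γ → ∀ (p : A), Bdd S m p → ∀ j' : Fin n,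
        Bdd S (m + 1) (p * S.x j') := by
      intro m hm p hp j'
      obtain ⟨q, hq, rfl⟩ := hp
      rw [T_eq_sum_support, Finset.sum_mul]
      apply Bdd.sum
      intro μ hμ
      have hdμ : deg μ ≤ d := by have := hq μ hμ; omega
      obtain ⟨C', p', hC', hB', he'⟩ := ih μ hdμ j'
      rw [mul_assoc, he', mul_add, ← mul_assoc, ← map_mul]
      refine Bdd.add (Bdd.smono _ ?_) (Bdd.ι_mul _ (hB'.mono_le ?_))
      · rw [deg_add, deg_unit]
        have := hq μ hμ; omega
      · have := hq μ hμ; omega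
    rcases le_or_gt k j with hkj | hjk
    · -- direct: no reordering needed
      refine ⟨1, 0, isUnit_one, Bdd.zero S _, ?_⟩
      rw [map_one, one_mul, add_zero]
      exact mono_mul_x S (fun i hi => hγmax i (lt_of_le_of_lt hkj hi))
    · -- j < k : use the quadratic relation
      obtain ⟨r0, rr, hq⟩ := S.quad j k
      rw [sub_eq_iff_eq_add'] at hq
      -- hq : x k * x j = ι (c j k) * (x j * x k) + (ι r0 + ∑ m, ι (rr m) * x m)
      obtain ⟨q₁, hs₁, e₁⟩ := expand S (deg γ') γ' le_rfl (S.c j k)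
      obtain ⟨C₂, p₂, hC₂, hB₂, e₂⟩ := ih γ' hdγ' j
      set C₁ : R := S.sigmaPow γ' (S.c j k) with hC₁def
      have hC₁ : IsUnit C₁ := isUnit_sigmaPow S (isUnit_c S hc hjk) γ'
      have hmono : S.mono γ' * S.x k = S.mono γ := by rw [mono_mul_x S hγ'max, hsum]
      have h5 : S.mono (γ' + unit j) * S.x k = S.mono (γ + unit j) := by
        have : ∀ i, k < i → (γ' + unit j) i = 0 := by
          intro i hi
          have hij : i ≠ j := by
            intro he; subst he; exact absurd (hjk.trans hi) (lt_irrefl _)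
          simp [hγ'max i hi, unit_apply_ne hij]
        rw [mono_mul_x S this]
        congr 1
        rw [← hsum]
        funext i
        simp [Pi.add_apply]
        omega
      refine ⟨C₁ * C₂,
        S.ι C₁ * (p₂ * S.x k) + (T S q₁ * S.x j) * S.x k
          + (S.mono γ' * S.ι r0 + ∑ m, (S.mono γ' * S.ι (rr m)) * S.x m),
        hC₁.mul hC₂, ?_, ?_⟩
      · -- Bdd bound for the junk
        have hdγ : deg γ = deg γ' + 1 := hdeg.symm
        refine Bdd.add (Bdd.add ?_ ?_) (Bdd.add ?_ ?_)
        · -- ι C₁ * (p₂ * x k)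
          apply Bdd.ι_mul
          have := key (deg γ' + 1) (by omega) p₂ hB₂ k
          exact this.mono_le (by omega)
        · -- (T q₁ * x j) * x k
          have h1 : Bdd S (deg γ') (T S q₁) := Bdd.ofT (fun μ hμ => (hs₁ μ hμ).2)
          have h2 := key (deg γ') (by omega) _ h1 j
          have h3 := key (deg γ' + 1) (by omega) _ h2 k
          exact h3.mono_le (by omega)
        · -- mono γ' * ι r0
          obtain ⟨qa, hsa, ea⟩ := expand S (deg γ') γ' le_rfl r0
          rw [ea]
          refine Bdd.add (Bdd.smono _ (by omega)) ((Bdd.ofT (fun μ hμ => (hsa μ hμ).2)).mono_le ?_)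
          omega
        · -- ∑ m, (mono γ' * ι (rr m)) * x m
          apply Bdd.sum
          intro m _
          obtain ⟨qm, hsm, em⟩ := expand S (deg γ') γ' le_rfl (rr m)
          rw [em, add_mul]
          refine Bdd.add ?_ ?_
          · obtain ⟨Cm, pm, hCm, hBm, hem⟩ := ih γ' hdγ' m
            rw [mul_assoc, hem, mul_add, ← mul_assoc, ← map_mul]
            refine Bdd.add (Bdd.smono _ ?_) (Bdd.ι_mul _ (hBm.mono_le ?_))
            · rw [deg_add, deg_unit]; omega
            · omega
          · have h1 : Bdd S (deg γ') (T S qm) := Bdd.ofT (fun μ hμ => (hsm μ hμ).2)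
            have h2 := key (deg γ') (by omega) _ h1 m
            exact h2.mono_le (by omega)
      · -- the equation
        calc S.mono γ * S.x j = S.mono γ' * (S.x k * S.x j) := by
              rw [← hmono, mul_assoc]
          _ = S.mono γ' * (S.ι (S.c j k) * (S.x j * S.x k))
              + (S.mono γ' * S.ι r0 + ∑ m, (S.mono γ' * S.ι (rr m)) * S.x m) := by
              rw [hq, mul_add, mul_add, Finset.mul_sum]
              congr 2
              apply Finset.sum_congr rfl
              intro m _
              rw [mul_assoc]
          _ = (S.ι C₁ * S.mono γ' + T S q₁) * (S.x j * S.x k)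
              + (S.mono γ' * S.ι r0 + ∑ m, (S.mono γ' * S.ι (rr m)) * S.x m) := by
              rw [← mul_assoc, e₁, hC₁def]
          _ = S.ι C₁ * ((S.mono γ' * S.x j) * S.x k) + (T S q₁ * S.x j) * S.x k
              + (S.mono γ' * S.ι r0 + ∑ m, (S.mono γ' * S.ι (rr m)) * S.x m) := by
              rw [add_mul, mul_assoc (S.ι C₁), ← mul_assoc (S.mono γ'),
                ← mul_assoc (T S q₁)]
          _ = S.ι C₁ * ((S.ι C₂ * S.mono (γ + unit j)) + p₂ * S.x k)
              + (T S q₁ * S.x j) * S.x k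
              + (S.mono γ' * S.ι r0 + ∑ m, (S.mono γ' * S.ι (rr m)) * S.x m) := by
              rw [e₂, add_mul, mul_assoc (S.ι C₂), h5]
          _ = _ := by
              rw [mul_add, ← mul_assoc (S.ι C₁), ← map_mul]
              abel

end SkewPBWAux

namespace SkewPBWAux

open Finsupp

variable {R A : Type*} [Ring R] [Ring A] {n : ℕ}

lemma Bdd.mul_x (S : SkewPBW R A n) (hc : S.CCentral) {m : ℕ} {p : A} (j : Fin n)
    (h : Bdd S m p) : Bdd S (m + 1) (p * S.x j) := by
  obtain ⟨q, hq, rfl⟩ := h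
  rw [T_eq_sum_support, Finset.sum_mul]
  apply Bdd.sum
  intro μ hμ
  obtain ⟨C', p', hC', hB', he'⟩ := reorder S hc (deg μ) μ le_rfl j
  rw [mul_assoc, he', mul_add, ← mul_assoc, ← map_mul]
  refine Bdd.add (Bdd.smono _ ?_) (Bdd.ι_mul _ (hB'.mono_le ?_))
  · rw [deg_add, deg_unit]; have := hq μ hμ; omega
  · have := hq μ hμ; omega

lemma reorder2 (S : SkewPBW R A n) (hc : S.CCentral) :
    ∀ (d : ℕ) (β : Fin n → ℕ), deg β ≤ d → ∀ γ : Fin n → ℕ,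
    ∃ (C : R) (p : A), IsUnit C ∧ Bdd S (deg γ + deg β) p ∧
      S.mono γ * S.mono β = S.ι C * S.mono (γ + β) + p := by
  intro d
  induction d with
  | zero =>
    intro β hβ γ
    have h0 : β = 0 := deg_eq_zero (Nat.le_zero.mp hβ)
    subst h0
    exact ⟨1, 0, isUnit_one, Bdd.zero S _, by
      rw [mono_zero, map_one, mul_one, one_mul, add_zero, add_zero]⟩
  | succ d ih =>
    intro β hβd γ
    by_cases h0 : β = 0
    · subst h0
      exact ⟨1, 0, isUnit_one, Bdd.zero S _, by
        rw [mono_zero, map_one, mul_one, one_mul, add_zero, add_zero]⟩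
    obtain ⟨k, β', hsum, hdeg, hβ'max, hβmax⟩ := exists_max h0
    have hdβ' : deg β' ≤ d := by omega
    obtain ⟨C', p', hC', hB', he'⟩ := ih β' hdβ' γ
    obtain ⟨C'', p'', hC'', hB'', he''⟩ := reorder S hc (deg (γ + β')) (γ + β') le_rfl k
    have hmono : S.mono β' * S.x k = S.mono β := by rw [mono_mul_x S hβ'max, hsum]
    have hγβ : γ + β' + unit k = γ + β := by rw [add_assoc, hsum]
    refine ⟨C' * C'', S.ι C' * p'' + p' * S.x k, hC'.mul hC'', ?_, ?_⟩
    · refine Bdd.add (Bdd.ι_mul _ (hB''.mono_le ?_)) ((Bdd.mul_x S hc k hB').mono_le ?_)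
      · rw [deg_add]; omega
      · omega
    · calc S.mono γ * S.mono β = (S.mono γ * S.mono β') * S.x k := by
            rw [← hmono, mul_assoc]
        _ = (S.ι C' * S.mono (γ + β') + p') * S.x k := by rw [he']
        _ = S.ι C' * (S.mono (γ + β') * S.x k) + p' * S.x k := by
            rw [add_mul, mul_assoc]
        _ = S.ι C' * (S.ι C'' * S.mono (γ + β) + p'') + p' * S.x k := by
            rw [he'', hγβ]
        _ = _ := by rw [mul_add, ← mul_assoc, ← map_mul]; abel

lemma claimC (S : SkewPBW R A n) (hc : S.CCentral) {r : R} {γ β : Fin n → ℕ}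
    (h : S.ι r * (S.mono γ * S.mono β) = 0) : r = 0 := by
  obtain ⟨C, p, hC, hB, he⟩ := reorder2 S hc (deg β) β le_rfl γ
  obtain ⟨q, hq, rfl⟩ := hB
  rw [he, mul_add, ← mul_assoc, ← map_mul, ι_mul_T] at h
  have h2 : T S (Finsupp.single (γ + β) (r * C) + q.mapRange (r * ·) (mul_zero r)) = 0 := by
    rw [T_add, T_single]
    exact h
  have h4 := DFunLike.congr_fun (eq_zero_of_T_eq_zero S h2) (γ + β)
  simp only [Finsupp.add_apply, Finsupp.single_eq_same, Finsupp.mapRange_apply,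
    Finsupp.coe_zero, Pi.zero_apply] at h4
  have hq0 : q (γ + β) = 0 := by
    by_contra hne
    have := hq (γ + β) (Finsupp.mem_support_iff.mpr hne)
    rw [deg_add] at this
    omega
  rw [hq0, mul_zero, add_zero] at h4
  obtain ⟨u, rfl⟩ := hC
  calc r = r * (↑u * ↑u⁻¹) := by rw [Units.mul_inv, mul_one]
    _ = (r * ↑u) * ↑u⁻¹ := by rw [mul_assoc]
    _ = 0 := by rw [h4, zero_mul]

end SkewPBWAux

namespace SkewPBWAux

open Finsupp

variable {R A : Type*} [Ring R] [Ring A] {n : ℕ}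

/-- write a nonzero finsupp as an injectively-indexed `Fin (s+1)` family -/
lemma exists_fin_rep (S : SkewPBW R A n) (cg : (Fin n → ℕ) →₀ R) (hne : cg.support.Nonempty) :
    ∃ (s : ℕ) (b : Fin (s + 1) → R) (Y : Fin (s + 1) → Fin n → ℕ),
      Function.Injective Y ∧ (∀ j, b j = cg (Y j)) ∧
      (∀ γ ∈ cg.support, ∃ j, Y j = γ) ∧
      T S cg = ∑ j, S.ι (b j) * S.mono (Y j) := by
  obtain ⟨s, hs⟩ : ∃ s, cg.support.card = s + 1 := by
    rcases Nat.exists_eq_add_of_le (Finset.card_pos.mpr hne) with ⟨s, hs⟩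
    exact ⟨s, by omega⟩
  let E : {x // x ∈ cg.support} ≃ Fin (s + 1) := cg.support.equivFin.trans (finCongr hs)
  refine ⟨s, fun j => cg (E.symm j).1, fun j => (E.symm j).1, ?_, fun j => rfl, ?_, ?_⟩
  · intro i1 i2 h12
    exact E.symm.injective (Subtype.ext h12)
  · intro γ hγ
    exact ⟨E ⟨γ, hγ⟩, by simp⟩
  · rw [T_eq_sum_support,
      ← Finset.sum_coe_sort cg.support (fun γ => S.ι (cg γ) * S.mono γ),
      ← Equiv.sum_comp E.symm (fun z => S.ι (cg z.1) * S.mono z.1)]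

lemma armCor (S : SkewPBW R A n) (hArm : S.SDSkewArmendariz) {t : ℕ}
    (a : Fin (t + 1) → R) (X : Fin (t + 1) → Fin n → ℕ) (hX : Function.Injective X)
    (cg : (Fin n → ℕ) →₀ R)
    (h0 : (∑ i, S.ι (a i) * S.mono (X i)) * T S cg = 0) :
    ∀ (i : Fin (t + 1)) (γ : Fin n → ℕ),
      (S.ι (a i) * S.mono (X i)) * (S.ι (cg γ) * S.mono γ) = 0 := by
  intro i γ
  by_cases hγ : γ ∈ cg.support
  · obtain ⟨s, b, Y, hY, hb, hsur, hrep⟩ := exists_fin_rep S cg ⟨γ, hγ⟩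
    rw [hrep] at h0
    obtain ⟨j, hj⟩ := hsur γ hγ
    have := hArm t s a X b Y hX hY h0 i j
    rw [hb j, hj] at this
    exact this
  · rw [Finsupp.notMem_support_iff.mp hγ, map_zero, zero_mul, mul_zero]

lemma armCor' (S : SkewPBW R A n) (hArm : S.SDSkewArmendariz) {t : ℕ}
    (b : Fin (t + 1) → R) (Y : Fin (t + 1) → Fin n → ℕ) (hY : Function.Injective Y)
    (cf : (Fin n → ℕ) →₀ R)
    (h0 : T S cf * (∑ j, S.ι (b j) * S.mono (Y j)) = 0) :
    ∀ (γ : Fin n → ℕ) (j : Fin (t + 1)),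
      (S.ι (cf γ) * S.mono γ) * (S.ι (b j) * S.mono (Y j)) = 0 := by
  intro γ j
  by_cases hγ : γ ∈ cf.support
  · obtain ⟨s, a, X, hX, ha, hsur, hrep⟩ := exists_fin_rep S cf ⟨γ, hγ⟩
    rw [hrep] at h0
    obtain ⟨i, hi⟩ := hsur γ hγ
    have := hArm s t a X b Y hX hY h0 i j
    rw [ha i, hi] at this
    exact this
  · rw [Finsupp.notMem_support_iff.mp hγ, map_zero, zero_mul, zero_mul]

/-- the key two-term lemma: `(a x^α)(b x^β) = 0` forces `ab = 0`. -/
lemma two_term (S : SkewPBW R A n) (hc : S.CCentral) (hSig : S.SigmaCompatible)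
    (hArm : S.SDSkewArmendariz) {a b : R} {α β : Fin n → ℕ}
    (h : (S.ι a * S.mono α) * (S.ι b * S.mono β) = 0) : a * b = 0 := by
  obtain ⟨cf, hcf⟩ := T_surj S (S.ι a * S.mono α * S.ι b)
  have h1 : T S cf * (∑ _j : Fin (0 + 1), S.ι (1 : R) * S.mono β) = 0 := by
    rw [Fin.sum_univ_one, map_one, one_mul, hcf]
    rw [mul_assoc]
    exact h
  have h2 := armCor' S hArm (t := 0) (fun _ => (1 : R)) (fun _ => β)
    (fun i1 i2 _ => Fin.ext (by omega)) cf h1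
  have h3 : ∀ γ, cf γ = 0 := by
    intro γ
    have := h2 γ 0
    rw [map_one, one_mul, mul_assoc] at this
    exact claimC S hc this
  have hcf0 : cf = 0 := Finsupp.ext h3
  rw [hcf0, T_zero] at hcf
  have h4 : S.ι a * (S.mono α * S.ι b) = 0 := by rw [← mul_assoc]; exact hcf.symm
  exact (hSig a b α).mp (coeff_lemma S h4)

end SkewPBWAux

namespace SkewPBWAux

open Finsupp

variable {R A : Type*} [Ring R] [Ring A] {n : ℕ}

/-- a represented polynomial together with a chosen coefficient -/
structure Rep (R : Type*) [Ring R] (n : ℕ) where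
  t : ℕ
  co : Fin (t + 1) → R
  ex : Fin (t + 1) → Fin n → ℕ
  inj : Function.Injective ex
  pk : Fin (t + 1)

def Rep.val (S : SkewPBW R A n) (ρ : Rep R n) : A :=
  ∑ i, S.ι (ρ.co i) * S.mono (ρ.ex i)

def Rep.cc (ρ : Rep R n) : R := ρ.co ρ.pk

lemma cc_coeff (S : SkewPBW R A n) (ρ : Rep R n) {cQ : (Fin n → ℕ) →₀ R}
    (h : T S cQ = Rep.val S ρ) : cQ (ρ.ex ρ.pk) = ρ.cc := by
  have hval : Rep.val S ρ = T S (∑ i, Finsupp.single (ρ.ex i) (ρ.co i)) := by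
    rw [T_sum]
    apply Finset.sum_congr rfl
    intro i _
    rw [T_single]
  have hcQ : cQ = ∑ i, Finsupp.single (ρ.ex i) (ρ.co i) := T_inj S (by rw [h, hval])
  rw [hcQ, Finsupp.finset_sum_apply, Finset.sum_eq_single ρ.pk]
  · rw [Finsupp.single_eq_same]; rfl
  · intro i _ hne
    exact Finsupp.single_eq_of_ne' (fun he => hne (ρ.inj he))
  · intro habs
    exact absurd (Finset.mem_univ ρ.pk) habs

lemma step_lemma (S : SkewPBW R A n) (hc : S.CCentral) (hSig : S.SigmaCompatible)
    (hArm : S.SDSkewArmendariz) (ρ : Rep R n) {Q : A} (h : Rep.val S ρ * Q = 0)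
    {cQ : (Fin n → ℕ) →₀ R} (hcQ : T S cQ = Q) (γ : Fin n → ℕ) : ρ.cc * cQ γ = 0 := by
  have h0 : (∑ i, S.ι (ρ.co i) * S.mono (ρ.ex i)) * T S cQ = 0 := by
    rw [hcQ]; exact h
  exact two_term S hc hSig hArm (armCor S hArm ρ.co ρ.ex ρ.inj cQ h0 ρ.pk γ)

lemma aux_induction (S : SkewPBW R A n) (hc : S.CCentral) (hSig : S.SigmaCompatible)
    (hArm : S.SDSkewArmendariz) :
    ∀ (L : List (Rep R n)) (ρ : Rep R n), L ≠ [] →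
      Rep.val S ρ * (L.map (Rep.val S)).prod = 0 →
      ρ.cc * (L.map Rep.cc).prod = 0 := by
  intro L
  induction L with
  | nil => intro ρ h; exact absurd rfl h
  | cons ρ₂ rest ih =>
    intro ρ _ h
    rw [List.map_cons, List.prod_cons] at h
    obtain ⟨cQ, hcQ⟩ := T_surj S (Rep.val S ρ₂ * (rest.map (Rep.val S)).prod)
    have hcc : ∀ γ, ρ.cc * cQ γ = 0 :=
      fun γ => step_lemma S hc hSig hArm ρ h hcQ γ
    have hz : S.ι ρ.cc * (Rep.val S ρ₂ * (rest.map (Rep.val S)).prod) = 0 := by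
      rw [← hcQ, ι_mul_T]
      have hmap : cQ.mapRange (ρ.cc * ·) (mul_zero _) = 0 := by
        apply Finsupp.ext
        intro γ
        rw [Finsupp.mapRange_apply, hcc γ]
        rfl
      rw [hmap, T_zero]
    rcases eq_or_ne rest [] with hrest | hrest
    · subst hrest
      rw [List.map_nil, List.prod_nil, mul_one] at hcQ
      rw [List.map_cons, List.map_nil, List.prod_cons, List.prod_nil, mul_one]
      have := hcc (ρ₂.ex ρ₂.pk)
      rw [cc_coeff S ρ₂ hcQ] at this
      exact this
    · set ρ₂' : Rep R n := ⟨ρ₂.t, fun i => ρ.cc * ρ₂.co i, ρ₂.ex, ρ₂.inj, ρ₂.pk⟩ with hρ₂'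
      have hval : Rep.val S ρ₂' = S.ι ρ.cc * Rep.val S ρ₂ := by
        rw [Rep.val, Rep.val, Finset.mul_sum]
        apply Finset.sum_congr rfl
        intro i _
        rw [map_mul, mul_assoc]
      have h2 : Rep.val S ρ₂' * (rest.map (Rep.val S)).prod = 0 := by
        rw [hval, mul_assoc]
        exact hz
      have h3 := ih ρ₂' hrest h2
      have hcc' : ρ₂'.cc = ρ.cc * ρ₂.cc := rfl
      rw [hcc'] at h3
      rw [List.map_cons, List.prod_cons, ← mul_assoc]
      exact h3

end SkewPBWAux

open SkewPBWAux

/-- Let `A` be a skew PBW extension of `R` with the constants `c_{i,j}`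
of condition (iv) central in `R`, where `R` is `Σ`-compatible and `(Σ,Δ)`-skew
Armendariz.  If `p₁ ⋯ p_l = 0` (`l ≥ 2`) in `A`, then for every choice of
coefficients `aₖ ∈ C_{pₖ}` (coefficients of the expansion of `pₖ` in the basis of
standard monomials), one has `a₁ a₂ ⋯ a_l = 0` in `R`. -/
theorem sdSkewArmendariz_prod_coeffs_eq_zero {R A : Type*} [Ring R] [Ring A] {n : ℕ}
    (S : SkewPBW R A n) (hc : S.CCentral)
    (hSig : S.SigmaCompatible) (hArm : S.SDSkewArmendariz)
    (l : ℕ) (hl : 2 ≤ l) (m : Fin l → ℕ)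
    (a : ∀ k : Fin l, Fin (m k + 1) → R)
    (X : ∀ k : Fin l, Fin (m k + 1) → Fin n → ℕ)
    (hX : ∀ k, Function.Injective (X k))
    (hprod : ((List.finRange l).map fun k => ∑ i, S.ι (a k i) * S.mono (X k i)).prod = 0)
    (idx : ∀ k : Fin l, Fin (m k + 1)) :
    ((List.finRange l).map fun k => a k (idx k)).prod = 0 := by
  obtain ⟨l', rfl⟩ : ∃ l', l = l' + 1 := ⟨l - 1, by omega⟩
  have hl' : 1 ≤ l' := by omega
  set F : Fin (l' + 1) → Rep R n := fun k => ⟨m k, a k, X k, hX k, idx k⟩ with hF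
  have hvF : ∀ k, Rep.val S (F k) = ∑ i, S.ι (a k i) * S.mono (X k i) := fun k => rfl
  have hcF : ∀ k, Rep.cc (F k) = a k (idx k) := fun k => rfl
  rw [List.finRange_succ, List.map_cons, List.prod_cons, List.map_map] at hprod
  rw [List.finRange_succ, List.map_cons, List.prod_cons, List.map_map]
  have hne : ((List.finRange l').map fun k => F k.succ) ≠ [] := by
    intro habs
    have := congrArg List.length habs
    simp [List.length_finRange] at this
    omega
  have := aux_induction S hc hSig hArm ((List.finRange l').map fun k => F k.succ) (F 0) hne ?_
  · rw [List.map_map] at this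
    exact this
  · rw [List.map_map]
    exact hprod
end

section
/- Let A = σ(R)⟨x_1,…,x_n⟩ be a skew PBW extension of a ring R with the elements c_{i,j} of condition (iv) central in R. If R is Σ-compatible and Σ-skew Armendariz, then R is skew Π-Armendariz with respect to A. -/
open scoped BigOperators

section Aux

variable {R A : Type*} [Ring R] [Ring A] {n : ℕ}

/-- Every element of `A` can be written as a finite sum `∑ ι(bⱼ) x^{Yⱼ}` with
distinct exponents, indexed by a nonempty `Fin` type. -/
private lemma skewPBW_exists_rep (S : SkewPBW R A n) (w : A) :
    ∃ (s : ℕ) (b : Fin (s + 1) → R) (Y : Fin (s + 1) → Fin n → ℕ),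
      Function.Injective Y ∧ w = ∑ j, S.ι (b j) * S.mono (Y j) := by
  obtain ⟨c0, hc0⟩ := S.free.2 w
  by_cases hs : c0.support = ∅
  · refine ⟨0, 0, 0, fun i j _ => Fin.ext (by omega), ?_⟩
    have hz : c0 = 0 := Finsupp.support_eq_empty.mp hs
    subst hz
    simp only [← hc0, Finsupp.sum_zero_index]
    simp [SkewPBW.mono]
  · obtain ⟨s, hcard⟩ := Nat.exists_eq_succ_of_ne_zero
      (fun h => hs (Finset.card_eq_zero.mp h))
    let e : Fin (s + 1) ≃ c0.support := (finCongr hcard.symm).trans c0.support.equivFin.symm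
    refine ⟨s, fun j => c0 (e j), fun j => ((e j : c0.support) : Fin n → ℕ), ?_, ?_⟩
    · intro j₁ j₂ h
      exact e.injective (Subtype.ext h)
    · rw [← hc0]
      show (Finsupp.sum c0 fun α r => S.ι r * S.mono α) = _
      rw [Finsupp.sum, ← Finset.sum_coe_sort c0.support (fun α => S.ι (c0 α) * S.mono α)]
      exact (Fintype.sum_equiv e _ _ fun j => rfl).symm

/-- Key step: if `(∑ ι(c·aᵤ) x^{Xᵤ}) · w = 0` then each `ι(c·aᵤ) · w = 0`. -/
private lemma skewPBW_key (S : SkewPBW R A n)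
    (hSig : S.SigmaCompatible) (hArm : S.SigmaSkewArmendariz)
    {m : ℕ} (a : Fin (m + 1) → R) (X : Fin (m + 1) → Fin n → ℕ)
    (hX : Function.Injective X) (c : R) (w : A)
    (h : (∑ u, S.ι (c * a u) * S.mono (X u)) * w = 0) :
    ∀ u, S.ι (c * a u) * w = 0 := by
  obtain ⟨s, b, Y, hY, rfl⟩ := skewPBW_exists_rep S w
  intro u
  have h2 : ∀ j, (c * a u) * b j = 0 := fun j =>
    (hSig _ _ _).mp (hArm m s (fun v => c * a v) X b Y hX hY h u j)
  rw [Finset.mul_sum]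
  refine Finset.sum_eq_zero fun j _ => ?_
  rw [← mul_assoc, ← map_mul, h2 j, map_zero, zero_mul]

private lemma skewPBW_pow (S : SkewPBW R A n)
    (hSig : S.SigmaCompatible) (hArm : S.SigmaSkewArmendariz)
    {m t : ℕ} (a : Fin (m + 1) → R) (X : Fin (m + 1) → Fin n → ℕ)
    (b : Fin (t + 1) → R) (Y : Fin (t + 1) → Fin n → ℕ)
    (hX : Function.Injective X) (hY : Function.Injective Y) :
    ∀ (k : ℕ) (c : R),
      S.ι c * ((∑ i, S.ι (a i) * S.mono (X i)) * (∑ j, S.ι (b j) * S.mono (Y j))) ^ k = 0 →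
      ∀ i j, c * (a i * b j) ^ k = 0 := by
  intro k
  induction k with
  | zero =>
    intro c h i j
    rw [pow_zero, mul_one] at h
    have hc0 : c = 0 := S.ι_inj (by rw [h, map_zero])
    simp [hc0]
  | succ k ih =>
    intro c h i j
    set F := ∑ i, S.ι (a i) * S.mono (X i) with hF
    set G := ∑ j, S.ι (b j) * S.mono (Y j) with hG
    have hcF : (∑ u, S.ι (c * a u) * S.mono (X u)) = S.ι c * F := by
      rw [hF, Finset.mul_sum]
      exact Finset.sum_congr rfl fun u _ => by rw [map_mul, mul_assoc]
    have h1 : (∑ u, S.ι (c * a u) * S.mono (X u)) * (G * (F * G) ^ k) = 0 := by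
      rw [hcF, mul_assoc]
      have : F * (G * (F * G) ^ k) = (F * G) ^ (k + 1) := by
        rw [pow_succ', mul_assoc]
      rw [this]
      exact h
    have h2 := skewPBW_key S hSig hArm a X hX c _ h1 i
    have hcG : (∑ v, S.ι ((c * a i) * b v) * S.mono (Y v)) = S.ι (c * a i) * G := by
      rw [hG, Finset.mul_sum]
      exact Finset.sum_congr rfl fun v _ => by rw [map_mul, mul_assoc]
    have h3 : (∑ v, S.ι ((c * a i) * b v) * S.mono (Y v)) * (F * G) ^ k = 0 := by
      rw [hcG, mul_assoc]
      exact h2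
    have h4 := skewPBW_key S hSig hArm b Y hY (c * a i) _ h3 j
    have h5 := ih (c * a i * b j) h4 i j
    calc c * (a i * b j) ^ (k + 1)
        = c * a i * b j * (a i * b j) ^ k := by rw [pow_succ', ← mul_assoc, ← mul_assoc]
      _ = 0 := h5

end Aux

/-- Let `A` be a skew PBW extension of `R` with the constants `c_{i,j}`
of condition (iv) central in `R`.  If `R` is `Σ`-compatible and `Σ`-skew Armendariz,
then `R` is skew `Π`-Armendariz with respect to `A`. -/
theorem sigmaSkewArmendariz_skewPiArmendariz {R A : Type*} [Ring R] [Ring A] {n : ℕ}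
    (S : SkewPBW R A n) (hc : S.CCentral)
    (hSig : S.SigmaCompatible) (hArm : S.SigmaSkewArmendariz) :
    S.SkewPiArmendariz := by
  intro m t a X b Y hX hY hnil i j
  obtain ⟨k, hk⟩ := hnil
  refine ⟨k, ?_⟩
  have h1 : S.ι 1 * ((∑ i, S.ι (a i) * S.mono (X i)) * (∑ j, S.ι (b j) * S.mono (Y j))) ^ k
      = 0 := by rw [map_one, one_mul, hk]
  simpa using skewPBW_pow S hSig hArm a X b Y hX hY k 1 h1 i j
end

section
/- Let A = σ(R)⟨x_1,…,x_n⟩ be a skew PBW extension of a ring R with the elements c_{i,j} of condition (iv) central in R, and suppose R is Σ-compatible and Σ-skew Armendariz. If p_1, p_2, …, p_l are elements of A (l ≥ 2) with p_1 p_2 ⋯ p_l = 0, then for every choice of coefficients a_k ∈ C_{p_k} (k = 1, …, l), where C_p denotes the set of coefficients of p in its unique expansion in standard monomials, one has a_1 a_2 ⋯ a_l = 0 in R. -/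
open scoped BigOperators

/-- If `R` is `Σ`-compatible and `Σ`-skew Armendariz and `p q = 0`, then every
coefficient of `p` annihilates `q` from the left. -/
lemma annih_aux {R A : Type*} [Ring R] [Ring A] {n : ℕ}
    (S : SkewPBW R A n) (hSig : S.SigmaCompatible) (hArm : S.SigmaSkewArmendariz)
    (t : ℕ) (a : Fin (t + 1) → R) (X : Fin (t + 1) → Fin n → ℕ)
    (hX : Function.Injective X) (q : A)
    (h : (∑ i, S.ι (a i) * S.mono (X i)) * q = 0) (i : Fin (t + 1)) :
    S.ι (a i) * q = 0 := by
  obtain ⟨c, rfl⟩ := S.free.2 q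
  by_cases hc : c = 0
  · subst hc; simp
  · have hcard : c.support.card ≠ 0 := by
      simp only [ne_eq, Finset.card_eq_zero, Finsupp.support_eq_empty]
      exact hc
    obtain ⟨s, hs⟩ := Nat.exists_eq_succ_of_ne_zero hcard
    set E : {α // α ∈ c.support} ≃ Fin (s + 1) := c.support.equivFin.trans (finCongr hs)
      with hE
    set Y : Fin (s + 1) → Fin n → ℕ := fun j => (E.symm j).1 with hYdef
    set b : Fin (s + 1) → R := fun j => c (Y j) with hbdef
    have hY : Function.Injective Y := fun j k hjk =>
      E.symm.injective (Subtype.ext hjk)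
    have hq : (c.sum fun α r =>
          S.ι r * ((List.finRange n).map fun i => S.x i ^ α i).prod)
        = ∑ j, S.ι (b j) * S.mono (Y j) := by
      rw [Finsupp.sum, ← Finset.sum_coe_sort]
      exact (Equiv.sum_comp E.symm
        (fun x : {α // α ∈ c.support} => S.ι (c x.1) * S.mono x.1)).symm
    beta_reduce at h ⊢
    rw [hq] at h ⊢
    have key : ∀ j, a i * b j = 0 := fun j =>
      (hSig (a i) (b j) (X i)).mp (hArm t s a X b Y hX hY h i j)
    rw [Finset.mul_sum]
    refine Finset.sum_eq_zero fun j _ => ?_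
    rw [← mul_assoc, ← map_mul, key j, map_zero, zero_mul]

/-- Let `A` be a skew PBW extension of `R` with the constants `c_{i,j}`
of condition (iv) central in `R`, where `R` is `Σ`-compatible and `Σ`-skew Armendariz.
If `p₁ ⋯ p_l = 0` (`l ≥ 2`) in `A`, then for every choice of coefficients
`aₖ ∈ C_{pₖ}` one has `a₁ a₂ ⋯ a_l = 0` in `R`. -/
theorem sigmaSkewArmendariz_prod_coeffs_eq_zero {R A : Type*} [Ring R] [Ring A] {n : ℕ}
    (S : SkewPBW R A n) (hc : S.CCentral)
    (hSig : S.SigmaCompatible) (hArm : S.SigmaSkewArmendariz)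
    (l : ℕ) (hl : 2 ≤ l) (m : Fin l → ℕ)
    (a : ∀ k : Fin l, Fin (m k + 1) → R)
    (X : ∀ k : Fin l, Fin (m k + 1) → Fin n → ℕ)
    (hX : ∀ k, Function.Injective (X k))
    (hprod : ((List.finRange l).map fun k => ∑ i, S.ι (a k i) * S.mono (X k i)).prod = 0)
    (idx : ∀ k : Fin l, Fin (m k + 1)) :
    ((List.finRange l).map fun k => a k (idx k)).prod = 0 := by
  induction l, hl using Nat.le_induction with
  | base =>
    have h2 : (∑ i, S.ι (a 0 i) * S.mono (X 0 i)) * (∑ i, S.ι (a 1 i) * S.mono (X 1 i))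
        = 0 := by
      simpa [List.finRange_succ] using hprod
    have := (hSig _ _ _).mp (hArm (m 0) (m 1) (a 0) (X 0) (a 1) (X 1)
      (hX 0) (hX 1) h2 (idx 0) (idx 1))
    simpa [List.finRange_succ] using this
  | succ l hl IH =>
    obtain ⟨l', rfl⟩ : ∃ l', l = l' + 1 := ⟨l - 1, by omega⟩
    set P : Fin (l' + 1 + 1) → A := fun k => ∑ i, S.ι (a k i) * S.mono (X k i) with hP
    set q : A := ((List.finRange (l' + 1)).map fun k => P k.succ).prod with hq
    have h0 : P 0 * q = 0 := by
      simpa [List.finRange_succ (n := l' + 1), List.map_map, Function.comp_def] using hprod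
    have hA0 : S.ι (a 0 (idx 0)) * q = 0 :=
      annih_aux S hSig hArm (m 0) (a 0) (X 0) (hX 0) q h0 (idx 0)
    -- data for the inductive hypothesis
    set a' : ∀ k : Fin (l' + 1), Fin (m k.succ + 1) → R :=
      fun k i => if k = 0 then a 0 (idx 0) * a k.succ i else a k.succ i with ha'
    have hprod' : ((List.finRange (l' + 1)).map
        fun k => ∑ i, S.ι (a' k i) * S.mono (X k.succ i)).prod = 0 := by
      rw [List.finRange_succ (n := l'), List.map_cons, List.map_map, List.prod_cons]
      have e0 : (∑ i, S.ι (a' 0 i) * S.mono (X (0 : Fin (l' + 1)).succ i))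
          = S.ι (a 0 (idx 0)) * P (0 : Fin (l' + 1)).succ := by
        rw [hP, Finset.mul_sum]
        refine Finset.sum_congr rfl fun i _ => ?_
        simp [ha', map_mul, mul_assoc]
      have es : ∀ k : Fin l', (∑ i, S.ι (a' k.succ i) * S.mono (X k.succ.succ i))
          = P k.succ.succ := by
        intro k
        simp [ha', hP, Fin.succ_ne_zero]
      calc ((∑ i, S.ι (a' 0 i) * S.mono (X (0 : Fin (l' + 1)).succ i)) *
            ((List.finRange l').map ((fun k : Fin (l' + 1) =>
              ∑ i, S.ι (a' k i) * S.mono (X k.succ i)) ∘ Fin.succ)).prod)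
          = S.ι (a 0 (idx 0)) * (P (0 : Fin (l' + 1)).succ *
            ((List.finRange l').map fun k : Fin l' => P k.succ.succ).prod) := by
            have hlist : (List.finRange l').map ((fun k : Fin (l' + 1) =>
                ∑ i, S.ι (a' k i) * S.mono (X k.succ i)) ∘ Fin.succ)
                = (List.finRange l').map fun k : Fin l' => P k.succ.succ :=
              List.map_congr_left fun k _ => es k
            rw [e0, hlist, mul_assoc]
        _ = S.ι (a 0 (idx 0)) * q := by
            rw [hq, List.finRange_succ (n := l'), List.map_cons, List.map_map,
              List.prod_cons]
            rfl
        _ = 0 := hA0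
    have := IH (fun k => m k.succ) a' (fun k => X k.succ) (fun k => hX k.succ)
      hprod' (fun k => idx k.succ)
    -- unpack the conclusion
    rw [List.finRange_succ (n := l'), List.map_cons, List.map_map, List.prod_cons] at this
    rw [List.finRange_succ (n := l' + 1), List.map_cons, List.map_map, List.prod_cons,
      List.finRange_succ (n := l'), List.map_cons, List.map_map, List.prod_cons]
    have e0 : a' 0 (idx (0 : Fin (l' + 1)).succ)
        = a 0 (idx 0) * a (0 : Fin (l' + 1)).succ (idx (0 : Fin (l' + 1)).succ) := by
      simp [ha']
    have es : ((List.finRange l').map ((fun k : Fin (l' + 1) => a' k (idx k.succ))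
          ∘ Fin.succ)).prod
        = ((List.finRange l').map (((fun k : Fin (l' + 1 + 1) => a k (idx k))
          ∘ Fin.succ) ∘ Fin.succ)).prod := by
      refine congrArg List.prod (List.map_congr_left fun k _ => ?_)
      simp [ha', Fin.succ_ne_zero]
    rw [e0, es, mul_assoc] at this
    exact this
end

section
/- Let R be a ring equipped with a family Σ = {σ_1,…,σ_n} of ring endomorphisms and a family Δ = {δ_1,…,δ_n} of maps with each δ_i a σ_i-derivation, and suppose R is (Σ,Δ)-compatible and reversible. If a, b ∈ R and ab is nilpotent, then a·σ^α(δ^β(b)) and a·δ^β(σ^α(b)) are nilpotent in R for all α, β ∈ ℕ^n. -/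
open scoped BigOperators

/-- Let `R` be a ring with endomorphisms `σ₁,…,σₙ` and
`σᵢ`-derivations `δ₁,…,δₙ`, `(Σ,Δ)`-compatible and reversible.  If `ab` is
nilpotent, then `a σ^α(δ^β(b))` and `a δ^β(σ^α(b))` are nilpotent, for all
`α, β ∈ ℕⁿ`. -/
theorem nilpotent_mul_sigma_delta {R : Type*} [Ring R] {n : ℕ}
    (σ : Fin n → R →+* R) (δ : Fin n → R → R)
    (hδadd : ∀ (i : Fin n) (r s : R), δ i (r + s) = δ i r + δ i s)
    (hδleib : ∀ (i : Fin n) (r s : R), δ i (r * s) = σ i r * δ i s + δ i r * s)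
    (hSig : ∀ (a b : R) (α : Fin n → ℕ), a * iterPow (fun i => ⇑(σ i)) α b = 0 ↔ a * b = 0)
    (hDel : ∀ a b : R, a * b = 0 → ∀ β : Fin n → ℕ, a * iterPow δ β b = 0)
    (hrev : IsReversible R)
    (a b : R) (hab : IsNilpotent (a * b)) (α β : Fin n → ℕ) :
    IsNilpotent (a * iterPow (fun i => ⇑(σ i)) α (iterPow δ β b)) ∧
    IsNilpotent (a * iterPow δ β (iterPow (fun i => ⇑(σ i)) α b)) := by
  obtain ⟨m, hm⟩ := hab
  have main : ∀ c : R, (∀ x : R, x * b = 0 → x * c = 0) → IsNilpotent (a * c) := by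
    intro c hc
    have L : ∀ x y : R, x * b * y = 0 → x * c * y = 0 := by
      intro x y h
      have h1 : y * x * b = 0 := by
        have := hrev _ _ h
        rwa [← mul_assoc] at this
      have h2 : y * x * c = 0 := hc _ h1
      have h3 : c * (y * x) = 0 := hrev _ _ h2
      rw [← mul_assoc] at h3
      have h4 := hrev _ _ h3
      rwa [← mul_assoc] at h4
    refine ⟨m, ?_⟩
    have step : ∀ k, k ≤ m → (a*b)^(m-k) * (a*c)^k = 0 := by
      intro k
      induction k with
      | zero => intro _; simpa using hm
      | succ k ih =>
        intro hk
        have hk' : k ≤ m := Nat.le_of_succ_le hk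
        have h0 := ih hk'
        have he : m - k = (m - (k+1)) + 1 := by omega
        rw [he, pow_succ] at h0
        have h0' : ((a*b)^(m-(k+1)) * a) * b * (a*c)^k = 0 := by
          simpa [mul_assoc] using h0
        have h1 := L _ _ h0'
        calc (a*b)^(m-(k+1)) * (a*c)^(k+1)
            = ((a*b)^(m-(k+1)) * a) * c * (a*c)^k := by
              rw [pow_succ']; simp [mul_assoc]
          _ = 0 := h1
    simpa using step m le_rfl
  constructor
  · exact main _ fun x hx => (hSig x _ α).mpr (hDel x b hx β)
  · exact main _ fun x hx => hDel x _ ((hSig x b α).mpr hx) β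
end

section
/- Let R be a ring equipped with a family Σ = {σ_1,…,σ_n} of ring endomorphisms and a family Δ = {δ_1,…,δ_n} of maps with each δ_i a σ_i-derivation, and suppose R is (Σ,Δ)-compatible. If a, b ∈ R and a·σ^θ(b) is nilpotent for some θ ∈ ℕ^n, then ab is nilpotent in R. -/
open scoped BigOperators

private lemma iterate_rh_mul {R : Type*} [Ring R] (g : R →+* R) (k : ℕ) (x y : R) :
    (⇑g)^[k] (x * y) = (⇑g)^[k] x * (⇑g)^[k] y := by
  induction k with
  | zero => simp
  | succ k ih => simp [Function.iterate_succ_apply', ih, map_mul]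

private lemma foldr_mul {R : Type*} [Ring R] (l : List (R → R))
    (hl : ∀ f ∈ l, ∀ x y : R, f (x * y) = f x * f y) (x y : R) :
    (l.foldr (· ∘ ·) id) (x * y) = (l.foldr (· ∘ ·) id) x * (l.foldr (· ∘ ·) id) y := by
  induction l with
  | nil => simp
  | cons f l ih =>
      simp only [List.foldr_cons, Function.comp_apply]
      rw [ih (fun g hg => hl g (List.mem_cons_of_mem f hg)),
        hl f List.mem_cons_self]

private lemma iterPow_sigma_mul {R : Type*} [Ring R] {n : ℕ} (σ : Fin n → R →+* R)
    (θ : Fin n → ℕ) (x y : R) :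
    iterPow (fun i => ⇑(σ i)) θ (x * y)
      = iterPow (fun i => ⇑(σ i)) θ x * iterPow (fun i => ⇑(σ i)) θ y := by
  apply foldr_mul
  intro f hf x y
  simp only [List.mem_map] at hf
  obtain ⟨i, -, rfl⟩ := hf
  exact iterate_rh_mul (σ i) (θ i) x y

/-- Let `R` be a ring with endomorphisms `σ₁,…,σₙ` and
`σᵢ`-derivations `δ₁,…,δₙ`, `(Σ,Δ)`-compatible.  If `a σ^θ(b)` is nilpotent for
some `θ ∈ ℕⁿ`, then `ab` is nilpotent. -/
theorem nilpotent_of_mul_sigma_nilpotent {R : Type*} [Ring R] {n : ℕ}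
    (σ : Fin n → R →+* R) (δ : Fin n → R → R)
    (hδadd : ∀ (i : Fin n) (r s : R), δ i (r + s) = δ i r + δ i s)
    (hδleib : ∀ (i : Fin n) (r s : R), δ i (r * s) = σ i r * δ i s + δ i r * s)
    (hSig : ∀ (a b : R) (α : Fin n → ℕ), a * iterPow (fun i => ⇑(σ i)) α b = 0 ↔ a * b = 0)
    (hDel : ∀ a b : R, a * b = 0 → ∀ β : Fin n → ℕ, a * iterPow δ β b = 0)
    (a b : R) (θ : Fin n → ℕ)
    (h : IsNilpotent (a * iterPow (fun i => ⇑(σ i)) θ b)) :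
    IsNilpotent (a * b) := by
  set s : R → R := iterPow (fun i => ⇑(σ i)) θ with hs_def
  have hs : ∀ c d : R, c * s d = 0 ↔ c * d = 0 := fun c d => hSig c d θ
  obtain ⟨m, hm⟩ := h
  refine ⟨m, ?_⟩
  have key : ∀ k, k ≤ m → (a * s b) ^ (m - k) * (a * b) ^ k = 0 := by
    intro k hk
    induction k with
    | zero => simpa using hm
    | succ k ih =>
        have ih' := ih (Nat.le_of_succ_le hk)
        have hsplit : m - k = (m - (k + 1)) + 1 := by omega
        rw [hsplit, pow_succ] at ih'
        -- ih' : (a*s b)^(m-(k+1)) * (a * s b) * (a*b)^k = 0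
        have h1 : ((a * s b) ^ (m - (k + 1)) * a * s b) * (a * b) ^ k = 0 := by
          rw [← ih']; simp [mul_assoc]
        have h2 : ((a * s b) ^ (m - (k + 1)) * a * s b) * s ((a * b) ^ k) = 0 :=
          (hs _ _).mpr h1
        have h3 : ((a * s b) ^ (m - (k + 1)) * a) * s (b * (a * b) ^ k) = 0 := by
          rw [hs_def, iterPow_sigma_mul, ← hs_def, ← mul_assoc]
          exact h2
        have h4 := (hs _ _).mp h3
        calc (a * s b) ^ (m - (k + 1)) * (a * b) ^ (k + 1)
            = ((a * s b) ^ (m - (k + 1)) * a) * (b * (a * b) ^ k) := by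
              simp [pow_succ', mul_assoc]
          _ = 0 := h4
  simpa using key m le_rfl
end
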